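/- arXiv:2009.10678 — 8 statements merged into one kernel-verified Lean document; each statement's English description precedes it below -/
import Mathlib

section
/- Let A be a real symmetric positive definite n×n matrix and R > 0. Then the quantum polar dual of the ellipsoid {x ∈ ℝⁿ : ⟨Ax, x⟩ ≤ R²} is the ellipsoid {p ∈ ℝⁿ : ⟨A⁻¹p, p⟩ ≤ (ħ/R)²}. In particular, {x : ⟨Ax,x⟩ ≤ ħ}^ħ = {p : ⟨A⁻¹p,p⟩ ≤ ħ}. -/
open Matrix

lemma symm_dot (n : ℕ) (A : Matrix (Fin n) (Fin n) ℝ) (hA : A.IsHermitian) (u x : Fin n → ℝ) :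
    A.mulVec u ⬝ᵥ x = A.mulVec x ⬝ᵥ u := by
  have hT : Aᵀ = A := (by simpa using congrArg Matrix.transpose hA : A = Aᵀ).symm
  rw [dotProduct_comm, dotProduct_mulVec, ← mulVec_transpose, hT]

lemma cs (n : ℕ) (A : Matrix (Fin n) (Fin n) ℝ) (hA : A.PosSemidef) (u x : Fin n → ℝ) :
    (A.mulVec u ⬝ᵥ x) ^ 2 ≤ (A.mulVec u ⬝ᵥ u) * (A.mulVec x ⬝ᵥ x) := by
  have key : ∀ t : ℝ, 0 ≤ (A.mulVec u ⬝ᵥ u) * (t * t)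
      + (2 * (A.mulVec u ⬝ᵥ x)) * t + (A.mulVec x ⬝ᵥ x) := by
    intro t
    have h0 := hA.dotProduct_mulVec_nonneg (t • u + x)
    simp only [star_trivial, mulVec_add, mulVec_smul, dotProduct_add, add_dotProduct,
      smul_dotProduct, dotProduct_smul, smul_eq_mul] at h0
    have hsymm := symm_dot n A hA.1 u x
    have c1 : x ⬝ᵥ A *ᵥ u = A *ᵥ u ⬝ᵥ x := dotProduct_comm _ _
    have c2 : u ⬝ᵥ A *ᵥ u = A *ᵥ u ⬝ᵥ u := dotProduct_comm _ _
    have c3 : u ⬝ᵥ A *ᵥ x = A *ᵥ x ⬝ᵥ u := dotProduct_comm _ _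
    have c4 : x ⬝ᵥ A *ᵥ x = A *ᵥ x ⬝ᵥ x := dotProduct_comm _ _
    rw [c1, c2, c3, c4, ← hsymm] at h0
    nlinarith [h0]
  have := discrim_le_zero key
  rw [discrim] at this
  nlinarith [this]

lemma polar (n : ℕ) (hbar c : ℝ) (hhbar : 0 < hbar) (hc : 0 < c)
    (A : Matrix (Fin n) (Fin n) ℝ) (hA : A.PosDef) :
    {p : Fin n → ℝ | ∀ x ∈ {x : Fin n → ℝ | A.mulVec x ⬝ᵥ x ≤ c}, p ⬝ᵥ x ≤ hbar}
      = {p : Fin n → ℝ | A⁻¹.mulVec p ⬝ᵥ p ≤ hbar ^ 2 / c} := by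
  have hAA : A * A⁻¹ = 1 := mul_nonsing_inv A (isUnit_iff_isUnit_det _ |>.1 hA.isUnit)
  ext p
  simp only [Set.mem_setOf_eq]
  set u := A⁻¹ *ᵥ p with hu
  have hAu : A *ᵥ u = p := by rw [hu, mulVec_mulVec, hAA, one_mulVec]
  have hq : u ⬝ᵥ p = p ⬝ᵥ u := dotProduct_comm _ _
  have hq0 : 0 ≤ u ⬝ᵥ p := by
    have := (hA.inv).posSemidef.dotProduct_mulVec_nonneg p
    simpa [dotProduct_comm] using this
  constructor
  · intro H
    rcases eq_or_lt_of_le hq0 with h0 | hpos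
    · rw [← h0]; positivity
    · set q := u ⬝ᵥ p with hqdef
      set t := Real.sqrt (c / q) with ht
      have ht0 : 0 ≤ t := Real.sqrt_nonneg _
      have ht2 : t ^ 2 = c / q := Real.sq_sqrt (by positivity)
      have hx : A *ᵥ (t • u) ⬝ᵥ (t • u) ≤ c := by
        rw [mulVec_smul, smul_dotProduct, dotProduct_smul, smul_eq_mul, smul_eq_mul, hAu]
        have : t * (t * (p ⬝ᵥ u)) = (t ^ 2) * q := by rw [← hq]; ring
        rw [this, ht2]
        field_simp; exact le_rfl
      have hle := H (t • u) hx
      rw [dotProduct_smul, smul_eq_mul, ← hq] at hle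
      -- hle : t * q ≤ hbar
      have htq : (t * q) ^ 2 = c * q := by
        rw [mul_pow, ht2]; field_simp
      have : c * q ≤ hbar ^ 2 := by nlinarith [sq_nonneg (t*q), mul_nonneg ht0 hpos.le]
      rw [le_div_iff₀ hc]
      nlinarith
  · intro hle x hx
    have hcs := cs n A hA.posSemidef u x
    rw [hAu, ← hq] at hcs
    have h1 : (p ⬝ᵥ x) ^ 2 ≤ hbar ^ 2 := by
      have hxnn : 0 ≤ A *ᵥ x ⬝ᵥ x := by simpa [dotProduct_comm] using hA.posSemidef.dotProduct_mulVec_nonneg x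
      have : (u ⬝ᵥ p) * (A *ᵥ x ⬝ᵥ x) ≤ (hbar ^ 2 / c) * c := by
        apply mul_le_mul hle hx hxnn (by positivity)
      rw [div_mul_cancel₀ _ hc.ne'] at this
      linarith
    nlinarith

/-- the quantum polar dual of the ellipsoid `{x : ⟨Ax,x⟩ ≤ R²}` (for a real
symmetric positive definite matrix `A`) is the ellipsoid `{p : ⟨A⁻¹p,p⟩ ≤ (ħ/R)²}`;
in particular `{x : ⟨Ax,x⟩ ≤ ħ}^ħ = {p : ⟨A⁻¹p,p⟩ ≤ ħ}`. -/
theorem statement1 (n : ℕ) (hbar : ℝ) (hhbar : 0 < hbar) (R : ℝ) (hR : 0 < R)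
    (A : Matrix (Fin n) (Fin n) ℝ) (hA : A.PosDef) :
    {p : Fin n → ℝ | ∀ x ∈ {x : Fin n → ℝ | A.mulVec x ⬝ᵥ x ≤ R ^ 2}, p ⬝ᵥ x ≤ hbar}
      = {p : Fin n → ℝ | A⁻¹.mulVec p ⬝ᵥ p ≤ (hbar / R) ^ 2} ∧
    {p : Fin n → ℝ | ∀ x ∈ {x : Fin n → ℝ | A.mulVec x ⬝ᵥ x ≤ hbar}, p ⬝ᵥ x ≤ hbar}
      = {p : Fin n → ℝ | A⁻¹.mulVec p ⬝ᵥ p ≤ hbar} := by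
  constructor
  · rw [polar n hbar (R ^ 2) hhbar (by positivity) A hA, div_pow]
  · rw [polar n hbar hbar hhbar hhbar A hA, sq, mul_div_assoc, div_self hhbar.ne', mul_one]
end

section
/- Let A and B be real symmetric positive definite n×n matrices. Then all eigenvalues λ₁, …, λₙ of the product AB are real and positive, and there exists an invertible real n×n matrix L such that LᵀAL = L⁻¹B(Lᵀ)⁻¹ = Λ, where Λ = diag(√λ₁, …, √λₙ). -/
open Matrix

private lemma aux_posdef_conj {n : ℕ} {S B : Matrix (Fin n) (Fin n) ℝ}
    (hB : B.PosDef) (hSsymm : Sᵀ = S) (hS : IsUnit S.det) : (S * B * S).PosDef := by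
  rw [posDef_iff_dotProduct_mulVec]
  constructor
  · have : (S * B * S)ᴴ = S * B * S := by
      rw [conjTranspose_mul, conjTranspose_mul, hB.isHermitian.eq,
        conjTranspose_eq_transpose_of_trivial, hSsymm, Matrix.mul_assoc]
    exact this
  · intro x hx
    have hinj : Function.Injective (S.mulVec) := Matrix.mulVec_injective_iff_isUnit.mpr
      ((Matrix.isUnit_iff_isUnit_det S).mpr hS)
    have hy : S *ᵥ x ≠ 0 := by
      intro h
      apply hx
      have := hinj (a₁ := x) (a₂ := 0) (by simpa using h)
      simpa using this
    have hpos := hB.dotProduct_mulVec_pos hy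
    have key : star x ⬝ᵥ ((S * B * S) *ᵥ x) = star (S *ᵥ x) ⬝ᵥ (B *ᵥ (S *ᵥ x)) := by
      rw [← Matrix.mulVec_mulVec, ← Matrix.mulVec_mulVec]
      rw [Matrix.dotProduct_mulVec (star x) S]
      congr 1
      have : star x ᵥ* S = star (S *ᵥ x) := by
        rw [show (S : Matrix (Fin n) (Fin n) ℝ) = Sᵀᵀ by rw [transpose_transpose],
          Matrix.vecMul_transpose, hSsymm]
        simp [star_mulVec, ← Matrix.mulVec_transpose, hSsymm]
      rw [this]
    rw [key]
    exact hpos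

/-- for real symmetric positive definite `A`, `B`, all (complex) eigenvalues of
`AB` are real and positive, and there is an invertible real matrix `L` with
`Lᵀ A L = L⁻¹ B (Lᵀ)⁻¹ = Λ = diag(√λ₁, …, √λₙ)`, the `λⱼ` being the eigenvalues of `AB`. -/
theorem statement3 (n : ℕ) (A B : Matrix (Fin n) (Fin n) ℝ)
    (hA : A.PosDef) (hB : B.PosDef) :
    ∃ lam : Fin n → ℝ, (∀ i, 0 < lam i) ∧
      spectrum ℂ ((A * B).map (Complex.ofReal)) = Set.range (fun i => (lam i : ℂ)) ∧
      ∃ L : Matrix (Fin n) (Fin n) ℝ, IsUnit L.det ∧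
        Lᵀ * A * L = Matrix.diagonal (fun i => Real.sqrt (lam i)) ∧
        L⁻¹ * B * (Lᵀ)⁻¹ = Matrix.diagonal (fun i => Real.sqrt (lam i)) := by
  -- the square root of A
  open scoped MatrixOrder in set S : Matrix (Fin n) (Fin n) ℝ := CFC.sqrt A with hSdef
  open scoped MatrixOrder in have hSpsd : S.PosSemidef := (CFC.sqrt_nonneg A).posSemidef
  open scoped MatrixOrder in have hSS : S * S = A := CFC.sqrt_mul_sqrt_self A hA.posSemidef.nonneg
  have hSsymm : Sᵀ = S := by
    rw [← conjTranspose_eq_transpose_of_trivial]; exact hSpsd.1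
  have hSdet : IsUnit S.det := by
    have hAdet : (0:ℝ) < A.det := hA.det_pos
    have : S.det * S.det = A.det := by rw [← det_mul, hSS]
    have hne : S.det ≠ 0 := by
      intro h; rw [h, mul_zero] at this; exact hAdet.ne' this.symm
    exact hne.isUnit
  -- M = S B S is positive definite
  have hM : (S * B * S).PosDef := aux_posdef_conj hB hSsymm hSdet
  set M : Matrix (Fin n) (Fin n) ℝ := S * B * S with hMdef
  set lam : Fin n → ℝ := hM.1.eigenvalues with hlamdef
  have hlampos : ∀ i, 0 < lam i := hM.eigenvalues_pos
  set U : Matrix (Fin n) (Fin n) ℝ := (hM.1.eigenvectorUnitary : Matrix (Fin n) (Fin n) ℝ)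
    with hUdef
  have hUstar : star U = Uᵀ := (conjTranspose_eq_transpose_of_trivial U).symm
  have hU1 : Uᵀ * U = 1 := by
    rw [← hUstar]; exact Unitary.coe_star_mul_self hM.1.eigenvectorUnitary
  have hU2 : U * Uᵀ = 1 := by
    rw [← hUstar]; exact Unitary.coe_mul_star_self hM.1.eigenvectorUnitary
  have hDlam : diagonal (RCLike.ofReal ∘ hM.1.eigenvalues) = diagonal lam := by
    rw [RCLike.ofReal_real_eq_id, Function.id_comp]
  have hspec : M = U * diagonal lam * Uᵀ := by
    rw [← hDlam, ← hUstar]; exact hM.1.spectral_theorem.trans (Unitary.conjStarAlgAut_apply _ _)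
  have hspec' : Uᵀ * M * U = diagonal lam := by
    rw [← hDlam, ← hUstar]; have h := hM.1.conjStarAlgAut_star_eigenvectorUnitary
    rw [Unitary.conjStarAlgAut_apply, Unitary.coe_star, star_star] at h; exact h
  refine ⟨lam, hlampos, ?_, ?_⟩
  · -- spectrum
    have hAB : A * B = (S * U) * diagonal lam * (Uᵀ * S⁻¹) := by
      calc A * B = S * (S * B * S) * S⁻¹ := by
            have h1 : S * (S * B * S) * S⁻¹ = S * (S * (B * (S * S⁻¹))) := by
              simp only [Matrix.mul_assoc]
            rw [h1, Matrix.mul_nonsing_inv S hSdet, mul_one, ← Matrix.mul_assoc, hSS]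
        _ = S * (U * diagonal lam * Uᵀ) * S⁻¹ := by rw [← hspec]
        _ = (S * U) * diagonal lam * (Uᵀ * S⁻¹) := by
            simp only [Matrix.mul_assoc]
    have hPQ : (S * U) * (Uᵀ * S⁻¹) = 1 := by
      rw [Matrix.mul_assoc, ← Matrix.mul_assoc U Uᵀ S⁻¹, hU2, one_mul,
        Matrix.mul_nonsing_inv S hSdet]
    have hQP : (Uᵀ * S⁻¹) * (S * U) = 1 := by
      rw [Matrix.mul_assoc, ← Matrix.mul_assoc S⁻¹ S U, Matrix.nonsing_inv_mul S hSdet,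
        one_mul, hU1]
    set f : ℝ →+* ℂ := algebraMap ℝ ℂ with hf
    have hfc : ∀ (X : Matrix (Fin n) (Fin n) ℝ), X.map Complex.ofReal = X.map f := by
      intro X; rfl
    have hmap_mul : ∀ (X Y : Matrix (Fin n) (Fin n) ℝ),
        (X * Y).map f = X.map f * Y.map f := fun X Y => Matrix.map_mul
    have hmap_one : (1 : Matrix (Fin n) (Fin n) ℝ).map f = 1 := Matrix.map_one f f.map_zero f.map_one
    set u : (Matrix (Fin n) (Fin n) ℂ)ˣ :=
      ⟨(S * U).map f, (Uᵀ * S⁻¹).map f,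
        by rw [← hmap_mul, hPQ, hmap_one],
        by rw [← hmap_mul, hQP, hmap_one]⟩ with hu
    have : (A * B).map f = (u : Matrix (Fin n) (Fin n) ℂ) * (diagonal lam).map f
        * ((u⁻¹ : (Matrix (Fin n) (Fin n) ℂ)ˣ) : Matrix (Fin n) (Fin n) ℂ) := by
      rw [hAB, hmap_mul, hmap_mul]; rfl
    rw [hfc, this, spectrum.units_conjugate]
    have hdiagmap : (diagonal lam).map f = diagonal (fun i => (lam i : ℂ)) := by
      rw [Matrix.diagonal_map f.map_zero]; rfl
    rw [hdiagmap, spectrum_diagonal]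
  · -- construction of L
    set r : Fin n → ℝ := fun i => Real.sqrt (Real.sqrt (lam i)) with hrdef
    have hrpos : ∀ i, 0 < r i := fun i => Real.sqrt_pos.mpr (Real.sqrt_pos.mpr (hlampos i))
    set d : Matrix (Fin n) (Fin n) ℝ := diagonal r with hddef
    set dinv : Matrix (Fin n) (Fin n) ℝ := diagonal (fun i => (r i)⁻¹) with hdinvdef
    have hdd : d * d = diagonal (fun i => Real.sqrt (lam i)) := by
      rw [hddef, diagonal_mul_diagonal]
      have hfun : (fun i => r i * r i) = fun i => Real.sqrt (lam i) :=
        funext fun i => Real.mul_self_sqrt (Real.sqrt_nonneg _)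
      rw [hfun]
    have hddinv : d * dinv = 1 := by
      rw [hddef, hdinvdef, diagonal_mul_diagonal, ← diagonal_one]
      have hfun : (fun i => r i * (r i)⁻¹) = fun _ : Fin n => (1:ℝ) :=
        funext fun i => mul_inv_cancel₀ (hrpos i).ne'
      rw [hfun]
    have hdinvd : dinv * d = 1 := by
      rw [hddef, hdinvdef, diagonal_mul_diagonal, ← diagonal_one]
      have hfun : (fun i => (r i)⁻¹ * r i) = fun _ : Fin n => (1:ℝ) :=
        funext fun i => inv_mul_cancel₀ (hrpos i).ne'
      rw [hfun]
    set L : Matrix (Fin n) (Fin n) ℝ := S⁻¹ * U * d with hLdef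
    have hLright : L * (dinv * Uᵀ * S) = 1 := by
      rw [hLdef]
      calc S⁻¹ * U * d * (dinv * Uᵀ * S)
          = S⁻¹ * (U * ((d * dinv) * (Uᵀ * S))) := by simp only [Matrix.mul_assoc]
        _ = S⁻¹ * (U * (Uᵀ * S)) := by rw [hddinv, one_mul]
        _ = S⁻¹ * ((U * Uᵀ) * S) := by simp only [Matrix.mul_assoc]
        _ = S⁻¹ * S := by rw [hU2, one_mul]
        _ = 1 := Matrix.nonsing_inv_mul S hSdet
    have hLdet : IsUnit L.det := Matrix.isUnit_det_of_right_inverse hLright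
    have hLinv : L⁻¹ = dinv * Uᵀ * S := Matrix.inv_eq_right_inv hLright
    have hSinvsymm : (S⁻¹)ᵀ = S⁻¹ := by rw [Matrix.transpose_nonsing_inv, hSsymm]
    have hLT : Lᵀ = d * Uᵀ * S⁻¹ := by
      rw [hLdef, Matrix.transpose_mul, Matrix.transpose_mul, hSinvsymm, hddef,
        diagonal_transpose, Matrix.mul_assoc]
    have hLTright : Lᵀ * (S * U * dinv) = 1 := by
      rw [hLT]
      calc d * Uᵀ * S⁻¹ * (S * U * dinv)
          = d * (Uᵀ * ((S⁻¹ * S) * (U * dinv))) := by simp only [Matrix.mul_assoc]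
        _ = d * (Uᵀ * (U * dinv)) := by rw [Matrix.nonsing_inv_mul S hSdet, one_mul]
        _ = d * ((Uᵀ * U) * dinv) := by simp only [Matrix.mul_assoc]
        _ = d * dinv := by rw [hU1, one_mul]
        _ = 1 := hddinv
    have hLTinv : (Lᵀ)⁻¹ = S * U * dinv := Matrix.inv_eq_right_inv hLTright
    refine ⟨L, hLdet, ?_, ?_⟩
    · rw [hLT, hLdef, ← hSS]
      calc d * Uᵀ * S⁻¹ * (S * S) * (S⁻¹ * U * d)
          = d * (Uᵀ * ((S⁻¹ * S) * ((S * S⁻¹) * (U * d)))) := by simp only [Matrix.mul_assoc]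
        _ = d * (Uᵀ * (U * d)) := by
            rw [Matrix.nonsing_inv_mul S hSdet, Matrix.mul_nonsing_inv S hSdet, one_mul, one_mul]
        _ = d * ((Uᵀ * U) * d) := by simp only [Matrix.mul_assoc]
        _ = d * d := by rw [hU1, one_mul]
        _ = diagonal (fun i => Real.sqrt (lam i)) := hdd
    · rw [hLinv, hLTinv]
      have hmid : Uᵀ * (S * B * S) * U = diagonal lam := hspec'
      calc dinv * Uᵀ * S * B * (S * U * dinv)
          = dinv * ((Uᵀ * (S * B * S) * U) * dinv) := by simp only [Matrix.mul_assoc]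
        _ = dinv * (diagonal lam * dinv) := by rw [hmid]
        _ = diagonal (fun i => (r i)⁻¹ * (lam i * (r i)⁻¹)) := by
            rw [hdinvdef, diagonal_mul_diagonal, diagonal_mul_diagonal]
        _ = diagonal (fun i => Real.sqrt (lam i)) := by
            have hfun : (fun i => (r i)⁻¹ * (lam i * (r i)⁻¹))
                = fun i => Real.sqrt (lam i) := by
              funext i
              have hr2 : r i * r i = Real.sqrt (lam i) := Real.mul_self_sqrt (Real.sqrt_nonneg _)
              have h2 : Real.sqrt (lam i) * Real.sqrt (lam i) = lam i :=
                Real.mul_self_sqrt (hlampos i).le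
              have hsne : Real.sqrt (lam i) ≠ 0 := (Real.sqrt_pos.mpr (hlampos i)).ne'
              calc (r i)⁻¹ * (lam i * (r i)⁻¹) = lam i * (r i * r i)⁻¹ := by ring
                _ = lam i * (Real.sqrt (lam i))⁻¹ := by rw [hr2]
                _ = lam i / Real.sqrt (lam i) := (div_eq_mul_inv _ _).symm
                _ = Real.sqrt (lam i) := Real.div_sqrt
            rw [hfun]
end

section
/- Let Σ be a real symmetric positive definite 2n×2n matrix satisfying the quantum condition Σ + (iħ/2)J ⪰ 0, and let Ω = {z ∈ ℝ²ⁿ : ⟨Σ⁻¹z, z⟩ ≤ 2} be the associated covariance ellipsoid. Let Ω_X ⊆ ℝⁿ be the image of Ω under (x,p) ↦ x and Ω_P ⊆ ℝⁿ its image under (x,p) ↦ p. Then (Ω_X, Ω_P) is a quantum dual pair: Ω_X^ħ ⊆ Ω_P. -/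
open Matrix ComplexOrder

/-- The standard symplectic matrix `J = [[0, Iₙ],[−Iₙ, 0]]`, with phase space `ℝ²ⁿ`
indexed by `Fin n ⊕ Fin n` (first summand: positions `x`, second summand: momenta `p`). -/
def Jmat (n : ℕ) : Matrix (Fin n ⊕ Fin n) (Fin n ⊕ Fin n) ℝ :=
  Matrix.fromBlocks 0 1 (-1) 0

private lemma key_ineq (n : ℕ) (hbar : ℝ)
    (Cov : Matrix (Fin n ⊕ Fin n) (Fin n ⊕ Fin n) ℝ)
    (hquant : (Cov.map Complex.ofReal
        + (Complex.I * (hbar / 2)) • (Jmat n).map Complex.ofReal).PosSemidef)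
    (u v : Fin n → ℝ) :
    hbar * (u ⬝ᵥ v) ≤ (Cov.submatrix Sum.inl Sum.inl).mulVec u ⬝ᵥ u
      + (Cov.submatrix Sum.inr Sum.inr).mulVec v ⬝ᵥ v := by
  set wc : (Fin n ⊕ Fin n) → ℂ :=
    Sum.elim (fun i => (u i : ℂ)) (fun i => Complex.I * v i) with hwc
  have h := hquant.dotProduct_mulVec_nonneg wc
  rw [Complex.le_def] at h
  have hre := h.1
  rw [Complex.zero_re] at hre
  have hexp : (star wc ⬝ᵥ (Cov.map Complex.ofReal
        + (Complex.I * (hbar / 2)) • (Jmat n).map Complex.ofReal).mulVec wc).re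
      = (Cov.submatrix Sum.inl Sum.inl).mulVec u ⬝ᵥ u
      + (Cov.submatrix Sum.inr Sum.inr).mulVec v ⬝ᵥ v - hbar * (u ⬝ᵥ v) := by
    simp only [dotProduct, mulVec, Matrix.add_apply, Matrix.smul_apply, Matrix.map_apply,
      Fintype.sum_sum_type, Pi.star_apply, hwc, Sum.elim_inl, Sum.elim_inr, Jmat,
      fromBlocks_apply₁₁, fromBlocks_apply₁₂, fromBlocks_apply₂₁, fromBlocks_apply₂₂,
      Matrix.zero_apply, Matrix.one_apply, Matrix.neg_apply, submatrix_apply,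
      Complex.re_sum, smul_eq_mul, star_mul', Complex.star_def, Complex.conj_ofReal,
      Complex.conj_I]
    simp only [_root_.map_mul, Complex.conj_I, Complex.conj_ofReal, Complex.normSq_apply]
    simp only [Complex.add_re, Complex.add_im, Complex.mul_re, Complex.mul_im,
      Complex.re_sum, Complex.im_sum, Complex.I_re, Complex.I_im, Complex.ofReal_re,
      Complex.ofReal_im, Complex.neg_re, Complex.neg_im, Complex.div_re, Complex.div_im,
      Complex.re_ofNat, Complex.im_ofNat, Complex.normSq_apply,
      mul_zero, zero_mul, mul_one, one_mul, zero_add, add_zero, sub_zero, zero_sub, neg_zero,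
      neg_neg]
    simp only [mul_ite, ite_mul, mul_zero, zero_mul, mul_one, one_mul,
      Finset.sum_ite_eq, Finset.sum_ite_eq', Finset.mem_univ, if_true,
      Finset.sum_sub_distrib, Finset.sum_add_distrib, Finset.sum_neg_distrib]
    ring_nf
    simp only [mul_ite, ite_mul, mul_zero, zero_mul, mul_one, one_mul, neg_mul, one_mul,
      Finset.sum_ite_eq, Finset.sum_ite_eq', Finset.mem_univ, if_true,
      Finset.mul_sum, Finset.sum_mul, Finset.sum_add_distrib, Finset.sum_sub_distrib,
      Finset.sum_neg_distrib]
    have e1 : ∑ x : Fin n, ∑ i : Fin n, u x * (Cov (Sum.inl x) (Sum.inl i) * u i)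
        = ∑ x : Fin n, ∑ i : Fin n, Cov (Sum.inl x) (Sum.inl i) * u i * u x :=
      Finset.sum_congr rfl fun x _ => Finset.sum_congr rfl fun i _ => by ring
    have e2 : ∑ x : Fin n, ∑ i : Fin n, v x * (Cov (Sum.inr x) (Sum.inr i) * v i)
        = ∑ x : Fin n, ∑ i : Fin n, Cov (Sum.inr x) (Sum.inr i) * v i * v x :=
      Finset.sum_congr rfl fun x _ => Finset.sum_congr rfl fun i _ => by ring
    have e3 : ∑ x : Fin n, u x * hbar * v x * (-1 / 2)
        = -(1 / 2) * ∑ i : Fin n, hbar * (u i * v i) := by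
      rw [Finset.mul_sum]; exact Finset.sum_congr rfl fun x _ => by ring
    have e4 : ∑ x : Fin n, v x * (hbar * u x * (-1 / 2))
        = -(1 / 2) * ∑ i : Fin n, hbar * (u i * v i) := by
      rw [Finset.mul_sum]; exact Finset.sum_congr rfl fun x _ => by ring
    linarith
  linarith [hexp ▸ hre]

/-- if the real symmetric positive definite covariance matrix `Σ` satisfies
the quantum condition `Σ + (iħ/2)J ⪰ 0`, then the orthogonal projections `Ω_X`, `Ω_P`
of the covariance ellipsoid `Ω = {z : ⟨Σ⁻¹z,z⟩ ≤ 2}` on the `x`- and `p`-spaces form a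
quantum dual pair: `Ω_X^ħ ⊆ Ω_P`. -/
theorem statement5 (n : ℕ) (hbar : ℝ) (hhbar : 0 < hbar)
    (Cov : Matrix (Fin n ⊕ Fin n) (Fin n ⊕ Fin n) ℝ) (hCov : Cov.PosDef)
    (hquant : (Cov.map Complex.ofReal
        + (Complex.I * (hbar / 2)) • (Jmat n).map Complex.ofReal).PosSemidef) :
    {p : Fin n → ℝ | ∀ x ∈ (fun z : (Fin n ⊕ Fin n) → ℝ => z ∘ Sum.inl) ''
        {z : (Fin n ⊕ Fin n) → ℝ | Cov⁻¹.mulVec z ⬝ᵥ z ≤ 2}, p ⬝ᵥ x ≤ hbar}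
      ⊆ (fun z : (Fin n ⊕ Fin n) → ℝ => z ∘ Sum.inr) ''
        {z : (Fin n ⊕ Fin n) → ℝ | Cov⁻¹.mulVec z ⬝ᵥ z ≤ 2} := by
  have key := key_ineq n hbar Cov hquant
  intro p hp
  simp only [Set.mem_setOf_eq, Set.mem_image] at hp ⊢
  set A := Cov.submatrix Sum.inl Sum.inl with hA
  set C := Cov.submatrix Sum.inr Sum.inr with hCdef
  have hCovdet : IsUnit Cov.det := hCov.det_pos.ne'.isUnit
  -- C is positive definite
  have hC : C.PosDef := by
    refine PosDef.of_dotProduct_mulVec_pos ?_ ?_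
    · ext i j
      simpa [hCdef] using hCov.1.apply (Sum.inr i) (Sum.inr j)
    · intro v hv
      have hw : Sum.elim (0 : Fin n → ℝ) v ≠ 0 := by
        intro hcon
        apply hv
        funext i
        exact congrFun hcon (Sum.inr i)
      have := hCov.dotProduct_mulVec_pos (x := Sum.elim (0 : Fin n → ℝ) v) hw
      simpa [dotProduct, mulVec, Fintype.sum_sum_type, hCdef, submatrix_apply] using this
  have hCdet : IsUnit C.det := hC.det_pos.ne'.isUnit
  set q := C⁻¹.mulVec p with hq
  have hCq : C.mulVec q = p := by
    rw [hq, mulVec_mulVec, mul_nonsing_inv _ hCdet, one_mulVec]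
  set w := Sum.elim (0 : Fin n → ℝ) q with hw
  set z := Cov.mulVec w with hz
  have hzinr : ∀ i, z (Sum.inr i) = p i := by
    intro i
    have h1 := congrFun hCq i
    simp only [mulVec, dotProduct, hCdef, submatrix_apply] at h1
    simpa [hz, mulVec, dotProduct, Fintype.sum_sum_type, hw] using h1
  have hinvz : Cov⁻¹.mulVec z = w := by
    rw [hz, mulVec_mulVec, nonsing_inv_mul _ hCovdet, one_mulVec]
  refine ⟨z, ?_, funext fun i => hzinr i⟩
  rw [hinvz]
  have hwz : w ⬝ᵥ z = p ⬝ᵥ q := by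
    simp only [dotProduct, Fintype.sum_sum_type, hw, Sum.elim_inl, Sum.elim_inr, Pi.zero_apply,
      zero_mul, Finset.sum_const_zero, zero_add]
    exact Finset.sum_congr rfl fun i _ => by rw [hzinr i, mul_comm]
  rw [hwz]
  -- bound a := ⟨Ap, p⟩ by hbar^2/2 using the polar hypothesis
  set a := A.mulVec p ⬝ᵥ p with ha
  have hapos : 0 ≤ a := by
    by_cases hp0 : p = 0
    · simp [ha, hp0]
    · have := hCov.dotProduct_mulVec_pos (x := Sum.elim p (0 : Fin n → ℝ)) (by
        intro hcon; apply hp0; funext i; exact congrFun hcon (Sum.inl i))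
      have h2 : 0 < A.mulVec p ⬝ᵥ p := by
        rw [dotProduct_comm]
        simpa [dotProduct, mulVec, Fintype.sum_sum_type, hA, submatrix_apply] using this
      linarith
  have hale : a ≤ hbar ^ 2 / 2 := by
    rcases eq_or_lt_of_le hapos with h0 | h0
    · nlinarith
    · set t := Real.sqrt (2 / a) with ht
      have htpos : 0 < t := Real.sqrt_pos.mpr (by positivity)
      have ht2 : t ^ 2 = 2 / a := Real.sq_sqrt (by positivity)
      -- the witness point in Ω projecting to t • A.mulVec p
      set z' := Cov.mulVec (Sum.elim (t • p) (0 : Fin n → ℝ)) with hz'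
      have hz'inl : ∀ i, z' (Sum.inl i) = t * (A.mulVec p) i := by
        intro i
        simp [hz', mulVec, dotProduct, Fintype.sum_sum_type, hA, submatrix_apply,
          Finset.mul_sum, mul_comm, mul_assoc, mul_left_comm]
      have hz'mem : Cov⁻¹.mulVec z' ⬝ᵥ z' ≤ 2 := by
        have hinv : Cov⁻¹.mulVec z' = Sum.elim (t • p) (0 : Fin n → ℝ) := by
          rw [hz', mulVec_mulVec, nonsing_inv_mul _ hCovdet, one_mulVec]
        rw [hinv]
        have : Sum.elim (t • p) (0 : Fin n → ℝ) ⬝ᵥ z' = t ^ 2 * a := by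
          simp only [dotProduct, Fintype.sum_sum_type, Sum.elim_inl, Sum.elim_inr, Pi.zero_apply,
            zero_mul, Finset.sum_const_zero, add_zero, Pi.smul_apply, smul_eq_mul]
          rw [ha, dotProduct_comm, dotProduct, Finset.mul_sum]
          exact Finset.sum_congr rfl fun i _ => by rw [hz'inl i]; ring
        rw [this, ht2]
        rw [div_mul_cancel₀]
        exact h0.ne'
      have hpx := hp (z' ∘ Sum.inl) ⟨z', hz'mem, rfl⟩
      have hpx' : p ⬝ᵥ (z' ∘ Sum.inl) = t * a := by
        rw [ha, dotProduct_comm (A.mulVec p) p, dotProduct, dotProduct, Finset.mul_sum]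
        exact Finset.sum_congr rfl fun i _ => by
          show p i * z' (Sum.inl i) = _
          rw [hz'inl i]; ring
      rw [hpx'] at hpx
      have hsq : (t * a) * (t * a) = 2 * a := by
        calc (t * a) * (t * a) = t ^ 2 * a ^ 2 := by ring
        _ = (2 / a) * a ^ 2 := by rw [ht2]
        _ = 2 * a := by field_simp
      have hta : 0 ≤ t * a := by positivity
      nlinarith [mul_le_mul hpx hpx hta hhbar.le]
  -- key inequality with u = p, v = (hbar/2) • q
  have hkey := key p ((hbar / 2) • q)
  have hCv : C.mulVec ((hbar / 2) • q) ⬝ᵥ ((hbar / 2) • q) = (hbar / 2) ^ 2 * (p ⬝ᵥ q) := by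
    rw [mulVec_smul, hCq, smul_dotProduct, dotProduct_smul, smul_eq_mul, smul_eq_mul]
    ring
  have hdp : p ⬝ᵥ ((hbar / 2) • q) = (hbar / 2) * (p ⬝ᵥ q) := by
    rw [dotProduct_smul, smul_eq_mul]
  rw [hCv, hdp, ← ha] at hkey
  nlinarith [hkey, hale, mul_pos hhbar hhbar]
end

section
/- Let S be a real symplectic 2n×2n matrix and r > 0. If the image S(B²ⁿ(r)) of the closed Euclidean ball B²ⁿ(r) ⊂ ℝ²ⁿ of radius r centered at 0 is contained in the product B^n(r) × B^n(r) ⊂ ℝⁿ × ℝⁿ of the closed Euclidean balls of radius r centered at 0, then S(B²ⁿ(r)) = B²ⁿ(r). -/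
open Matrix

/-- if a symplectic matrix `S` maps the closed Euclidean ball `B²ⁿ(r)` of radius
`r > 0` (described by `z ⬝ᵥ z ≤ r²`) into the product `Bⁿ(r) × Bⁿ(r)` of the closed Euclidean
balls of radius `r` in the two factors of `ℝ²ⁿ = ℝⁿ × ℝⁿ`, then `S(B²ⁿ(r)) = B²ⁿ(r)`. -/
theorem statement9 (n : ℕ) (r : ℝ) (hr : 0 < r)
    (S : Matrix (Fin n ⊕ Fin n) (Fin n ⊕ Fin n) ℝ)
    (hS : Sᵀ * Jmat n * S = Jmat n)
    (hsub : ∀ z : (Fin n ⊕ Fin n) → ℝ, z ⬝ᵥ z ≤ r ^ 2 →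
      (S.mulVec z ∘ Sum.inl) ⬝ᵥ (S.mulVec z ∘ Sum.inl) ≤ r ^ 2 ∧
      (S.mulVec z ∘ Sum.inr) ⬝ᵥ (S.mulVec z ∘ Sum.inr) ≤ r ^ 2) :
    S.mulVec '' {z : (Fin n ⊕ Fin n) → ℝ | z ⬝ᵥ z ≤ r ^ 2}
      = {z : (Fin n ⊕ Fin n) → ℝ | z ⬝ᵥ z ≤ r ^ 2} := by
  classical
  set J := Jmat n with hJdef
  -- basic facts about J
  have hJJ : J * J = -1 := by
    have h : (-1 : Matrix (Fin n ⊕ Fin n) (Fin n ⊕ Fin n) ℝ)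
        = fromBlocks (-1) (-0) (-0) (-1) := by
      rw [← Matrix.fromBlocks_neg, ← Matrix.fromBlocks_one]
    rw [hJdef, Jmat, h]
    simp [Matrix.fromBlocks_multiply]
  have hJT : Jᵀ = -J := by
    rw [hJdef, Jmat, Matrix.fromBlocks_transpose, Matrix.fromBlocks_neg]
    simp
  -- the inverse of S
  set Si := -(J * Sᵀ * J) with hSi
  have hSiS : Si * S = 1 := by
    have : Si * S = -(J * (Sᵀ * J * S)) := by
      rw [hSi]; noncomm_ring
    rw [this, hS, hJJ]; simp
  have hSSi : S * Si = 1 := mul_eq_one_comm.mp hSiS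
  -- M = SᵀS
  set M := Sᵀ * S with hM
  have hMT : Mᵀ = M := by rw [hM, Matrix.transpose_mul, Matrix.transpose_transpose]
  have hSiT : Siᵀ = -(J * S * J) := by
    rw [hSi]
    simp only [Matrix.transpose_neg, Matrix.transpose_mul, hJT, Matrix.transpose_transpose]
    noncomm_ring
  -- Minv = Si * Siᵀ is the inverse of M
  set Minv := Si * Siᵀ with hMinv
  have hMMinv : M * Minv = 1 := by
    rw [hM, hMinv]
    calc Sᵀ * S * (Si * Siᵀ) = Sᵀ * (S * Si) * Siᵀ := by noncomm_ring
    _ = Sᵀ * Siᵀ := by rw [hSSi]; noncomm_ring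
    _ = (Si * S)ᵀ := by rw [Matrix.transpose_mul]
    _ = 1 := by rw [hSiS, Matrix.transpose_one]
  have hMinvM : Minv * M = 1 := by
    rw [hM, hMinv]
    calc Si * Siᵀ * (Sᵀ * S) = Si * (S * Si)ᵀ * S := by
          rw [Matrix.transpose_mul]; noncomm_ring
    _ = Si * S := by rw [hSSi, Matrix.transpose_one]; noncomm_ring
    _ = 1 := hSiS
  -- trace Minv = trace M
  have hMinvJ : Minv = -(J * M * J) := by
    rw [hMinv, hSi, hSiT, hM]
    calc -(J * Sᵀ * J) * -(J * S * J) = J * Sᵀ * (J * J) * S * J := by noncomm_ring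
    _ = -(J * (Sᵀ * S) * J) := by rw [hJJ]; noncomm_ring
  have htrMinv : Minv.trace = M.trace := by
    rw [hMinvJ]
    rw [Matrix.trace_neg, Matrix.trace_mul_cycle, ← Matrix.mul_assoc, hJJ]
    simp
    rw [hM]
  -- trace M ≤ n + n, from the row bound
  have hrow : ∀ i, (fun j => S i j) ⬝ᵥ (fun j => S i j) ≤ 1 := by
    intro i
    set v : (Fin n ⊕ Fin n) → ℝ := fun j => S i j with hv
    set p := v ⬝ᵥ v with hp
    have hp0 : 0 ≤ p := by
      rw [hp, dotProduct]
      exact Finset.sum_nonneg fun j _ => mul_self_nonneg _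
    rcases eq_or_lt_of_le hp0 with h0 | hppos
    · rw [← h0]; norm_num
    · -- use z = (r / sqrt p) • v
      set c := r / Real.sqrt p with hc
      have hsp : Real.sqrt p > 0 := Real.sqrt_pos.mpr hppos
      set z := c • v with hz
      have hne : Real.sqrt p ≠ 0 := ne_of_gt hsp
      have hzz : z ⬝ᵥ z = r ^ 2 := by
        rw [hz, smul_dotProduct, dotProduct_smul, smul_eq_mul, smul_eq_mul, ← hp, hc,
          show p = Real.sqrt p * Real.sqrt p from (Real.mul_self_sqrt hp0).symm]
        field_simp
        rw [Real.sq_sqrt (sq_nonneg (Real.sqrt p))]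
      have hSz : S.mulVec z i = r * Real.sqrt p := by
        have hvv : S.mulVec v i = p := by rw [hp]; rfl
        have : S.mulVec z i = c * p := by
          rw [hz, Matrix.mulVec_smul, Pi.smul_apply, smul_eq_mul, hvv]
        rw [this, hc, div_mul_eq_mul_div,
          show p = Real.sqrt p * Real.sqrt p from (Real.mul_self_sqrt hp0).symm]
        field_simp
        rw [Real.sq_sqrt (sq_nonneg (Real.sqrt p))]
      obtain ⟨h1, h2⟩ := hsub z (le_of_eq hzz)
      have key : (r * Real.sqrt p) ^ 2 ≤ r ^ 2 := by
        cases i with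
        | inl a =>
          calc (r * Real.sqrt p) ^ 2 = (S.mulVec z (Sum.inl a)) ^ 2 := by rw [hSz]
          _ ≤ (S.mulVec z ∘ Sum.inl) ⬝ᵥ (S.mulVec z ∘ Sum.inl) := by
              rw [dotProduct]
              refine Finset.single_le_sum (f := fun a' => (S.mulVec z ∘ Sum.inl) a' * (S.mulVec z ∘ Sum.inl) a') (fun a' _ => mul_self_nonneg _) (Finset.mem_univ a) |>.trans_eq' ?_
              simp [sq]
          _ ≤ r ^ 2 := h1
        | inr a =>
          calc (r * Real.sqrt p) ^ 2 = (S.mulVec z (Sum.inr a)) ^ 2 := by rw [hSz]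
          _ ≤ (S.mulVec z ∘ Sum.inr) ⬝ᵥ (S.mulVec z ∘ Sum.inr) := by
              rw [dotProduct]
              refine Finset.single_le_sum (f := fun a' => (S.mulVec z ∘ Sum.inr) a' * (S.mulVec z ∘ Sum.inr) a') (fun a' _ => mul_self_nonneg _) (Finset.mem_univ a) |>.trans_eq' ?_
              simp [sq]
          _ ≤ r ^ 2 := h2
      have : r ^ 2 * p ≤ r ^ 2 := by
        calc r ^ 2 * p = (r * Real.sqrt p) ^ 2 := by
              rw [mul_pow, Real.sq_sqrt hp0]
        _ ≤ r ^ 2 := key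
      nlinarith [pow_pos hr 2]
  have htrM : M.trace ≤ (n : ℝ) + n := by
    have h1 : M.trace = (S * Sᵀ).trace := by rw [hM, Matrix.trace_mul_comm]
    have h2 : (S * Sᵀ).trace = ∑ i, (fun j => S i j) ⬝ᵥ (fun j => S i j) := by
      simp [Matrix.trace, Matrix.diag, Matrix.mul_apply, dotProduct]
    rw [h1, h2]
    calc ∑ i : Fin n ⊕ Fin n, (fun j => S i j) ⬝ᵥ (fun j => S i j)
        ≤ ∑ _i : Fin n ⊕ Fin n, (1 : ℝ) := Finset.sum_le_sum fun i _ => hrow i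
    _ = (n : ℝ) + n := by simp [Fintype.card_sum]
  -- the matrix B
  set B := Siᵀ * (M - 1) with hB
  have hBB : (Bᵀ * B).trace = 2 * M.trace - 2 * ((n : ℝ) + n) := by
    have hBT : Bᵀ = (M - 1) * Si := by
      rw [hB, Matrix.transpose_mul, Matrix.transpose_sub, hMT, Matrix.transpose_one,
        Matrix.transpose_transpose]
    have hexp : Bᵀ * B = M + Minv - (1 + 1) := by
      rw [hBT, hB]
      have : (M - 1) * Si * (Siᵀ * (M - 1)) = (M * Minv - Minv) * (M - 1) := by
        rw [hMinv]; noncomm_ring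
      rw [this, hMMinv]
      have : (1 - Minv) * (M - 1) = M - 1 - Minv * M + Minv := by noncomm_ring
      rw [this, hMinvM]
      abel
    rw [hexp]
    rw [Matrix.trace_sub, Matrix.trace_add, Matrix.trace_add, htrMinv, Matrix.trace_one]
    simp [Fintype.card_sum]
    ring
  have hBBnonneg : 0 ≤ (Bᵀ * B).trace := by
    rw [Matrix.trace]
    refine Finset.sum_nonneg fun j _ => ?_
    rw [Matrix.diag, Matrix.mul_apply]
    exact Finset.sum_nonneg fun i _ => by
      rw [Matrix.transpose_apply]; exact mul_self_nonneg _
  have hBBzero : (Bᵀ * B).trace = 0 := by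
    have : (Bᵀ * B).trace ≤ 0 := by rw [hBB]; linarith
    linarith
  -- B = 0
  have hB0 : B = 0 := by
    ext i j
    have hsum : ∑ j', ∑ i', B i' j' * B i' j' = 0 := by
      rw [← hBBzero]
      simp [Matrix.trace, Matrix.diag, Matrix.mul_apply]
    have hall : ∀ j' ∈ Finset.univ, ∀ i' ∈ Finset.univ, B i' j' * B i' j' = 0 := by
      have houter := (Finset.sum_eq_zero_iff_of_nonneg (fun j' _ =>
        Finset.sum_nonneg fun i' _ => mul_self_nonneg (B i' j'))).mp hsum
      intro j' hj' i' hi'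
      exact (Finset.sum_eq_zero_iff_of_nonneg (fun i' _ => mul_self_nonneg (B i' j'))).mp
        (houter j' hj') i' hi'
    have := hall j (Finset.mem_univ j) i (Finset.mem_univ i)
    simpa [mul_self_eq_zero] using this
  -- M = 1
  have hM1 : M = 1 := by
    have : Sᵀ * B = M - 1 := by
      rw [hB, ← Matrix.mul_assoc, ← Matrix.transpose_mul, hSiS, Matrix.transpose_one, Matrix.one_mul]
    rw [hB0, Matrix.mul_zero] at this
    exact sub_eq_zero.mp this.symm
  -- S preserves the quadratic form
  have hpres : ∀ z : (Fin n ⊕ Fin n) → ℝ, (S.mulVec z) ⬝ᵥ (S.mulVec z) = z ⬝ᵥ z := by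
    intro z
    calc (S.mulVec z) ⬝ᵥ (S.mulVec z) = (S.mulVec z) ᵥ* S ⬝ᵥ z := by
          rw [Matrix.dotProduct_mulVec]
    _ = (Sᵀ.mulVec (S.mulVec z)) ⬝ᵥ z := by rw [Matrix.mulVec_transpose]
    _ = ((Sᵀ * S).mulVec z) ⬝ᵥ z := by rw [Matrix.mulVec_mulVec]
    _ = z ⬝ᵥ z := by rw [← hM, hM1, Matrix.one_mulVec]
  -- conclude
  ext z
  simp only [Set.mem_image, Set.mem_setOf_eq]
  constructor
  · rintro ⟨w, hw, rfl⟩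
    rw [hpres w]; exact hw
  · intro hz
    refine ⟨Si.mulVec z, ?_, ?_⟩
    · have h1 : S.mulVec (Si.mulVec z) = z := by
        rw [Matrix.mulVec_mulVec, hSSi, Matrix.one_mulVec]
      have := hpres (Si.mulVec z)
      rw [h1] at this
      rw [← this]; exact hz
    · rw [Matrix.mulVec_mulVec, hSSi, Matrix.one_mulVec]
end

section
/- Let A be a real symmetric positive definite n×n matrix, X = {x ∈ ℝⁿ : ⟨Ax,x⟩ ≤ ħ}, and X^ħ = {p ∈ ℝⁿ : ⟨A⁻¹p,p⟩ ≤ ħ} its quantum polar dual. Then the product X × X^ħ ⊂ ℝ²ⁿ contains exactly one quantum blob, namely the ellipsoid Ω_A = {(x,p) : ⟨Ax,x⟩ + ⟨A⁻¹p,p⟩ ≤ ħ}: Ω_A = S_A(B²ⁿ(√ħ)) for the symplectic matrix S_A = [[A^{−1/2}, 0],[0, A^{1/2}]], Ω_A ⊆ X × X^ħ, and for every symplectic 2n×2n matrix S with S(B²ⁿ(√ħ)) ⊆ X × X^ħ one has S(B²ⁿ(√ħ)) = Ω_A. Moreover, the orthogonal projections of Ω_A onto the two factors ℝⁿ are exactly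 X and X^ħ. -/
open Matrix

/-- `S` is a (linear) symplectic transformation. -/
def IsSymplectic {n : ℕ} (S : Matrix (Fin n ⊕ Fin n) (Fin n ⊕ Fin n) ℝ) : Prop :=
  Sᵀ * Jmat n * S = Jmat n

/-- The closed ball `B²ⁿ(√ħ) = {z : z ⬝ᵥ z ≤ ħ}` in phase space `ℝ²ⁿ ≅ ℝⁿ × ℝⁿ`
(indexed by `Fin n ⊕ Fin n`). -/
def ballh (n : ℕ) (hbar : ℝ) : Set ((Fin n ⊕ Fin n) → ℝ) :=
  {z | z ⬝ᵥ z ≤ hbar}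

/-- The product `X × X^ħ ⊂ ℝ²ⁿ` of the ellipsoid `X = {x : ⟨Ax,x⟩ ≤ ħ}` with its quantum
polar dual `X^ħ = {p : ⟨A⁻¹p,p⟩ ≤ ħ}`. -/
def prodXXh (n : ℕ) (hbar : ℝ) (A : Matrix (Fin n) (Fin n) ℝ) : Set ((Fin n ⊕ Fin n) → ℝ) :=
  {z | A.mulVec (z ∘ Sum.inl) ⬝ᵥ (z ∘ Sum.inl) ≤ hbar ∧
       A⁻¹.mulVec (z ∘ Sum.inr) ⬝ᵥ (z ∘ Sum.inr) ≤ hbar}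

/-- The ellipsoid `Ω_A = {(x,p) : ⟨Ax,x⟩ + ⟨A⁻¹p,p⟩ ≤ ħ}`. -/
def OmegaA (n : ℕ) (hbar : ℝ) (A : Matrix (Fin n) (Fin n) ℝ) : Set ((Fin n ⊕ Fin n) → ℝ) :=
  {z | A.mulVec (z ∘ Sum.inl) ⬝ᵥ (z ∘ Sum.inl) + A⁻¹.mulVec (z ∘ Sum.inr) ⬝ᵥ (z ∘ Sum.inr) ≤ hbar}

section
open scoped ComplexOrder

/-- The positive semidefinite square root of a positive semidefinite matrix (as defined in
Mathlib of December 2024; removed from current Mathlib). -/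
noncomputable def Matrix.PosSemidef.sqrt {n 𝕜 : Type*} [Fintype n] [RCLike 𝕜] [DecidableEq n]
    {A : Matrix n n 𝕜} (hA : A.PosSemidef) : Matrix n n 𝕜 :=
  hA.1.eigenvectorUnitary.1 * diagonal ((↑) ∘ (√·) ∘ hA.1.eigenvalues) *
  (star hA.1.eigenvectorUnitary : Matrix n n 𝕜)

end

/-- The symplectic matrix `S_A = [[A^{−1/2}, 0],[0, A^{1/2}]]`. -/
noncomputable def SA {n : ℕ} (A : Matrix (Fin n) (Fin n) ℝ) (hA : A.PosDef) :
    Matrix (Fin n ⊕ Fin n) (Fin n ⊕ Fin n) ℝ :=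
  Matrix.fromBlocks (hA.posSemidef.sqrt)⁻¹ 0 0 hA.posSemidef.sqrt

lemma Matrix.PosSemidef.posSemidef_sqrt {k : Type*} [Fintype k] [DecidableEq k]
    {A : Matrix k k ℝ} (hA : A.PosSemidef) : hA.sqrt.PosSemidef := by
  unfold Matrix.PosSemidef.sqrt
  have h := (posSemidef_diagonal_iff.mpr fun i => by
    simp only [Function.comp_apply]; exact Real.sqrt_nonneg (hA.1.eigenvalues i) :
    (diagonal (RCLike.ofReal ∘ (√·) ∘ hA.1.eigenvalues : k → ℝ)).PosSemidef)
  exact h.mul_mul_conjTranspose_same (hA.1.eigenvectorUnitary : Matrix k k ℝ)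

lemma Matrix.PosSemidef.sqrt_mul_self {k : Type*} [Fintype k] [DecidableEq k]
    {A : Matrix k k ℝ} (hA : A.PosSemidef) : hA.sqrt * hA.sqrt = A := by
  let C : Matrix k k ℝ := hA.1.eigenvectorUnitary
  let E := diagonal (RCLike.ofReal ∘ Real.sqrt ∘ hA.1.eigenvalues : k → ℝ)
  suffices C * (E * (star C * C) * E) * star C = A by
    rw [Matrix.PosSemidef.sqrt]
    simpa only [← mul_assoc] using this
  have : E * E = diagonal (RCLike.ofReal ∘ hA.1.eigenvalues) := by
    rw [diagonal_mul_diagonal]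
    congr! with v
    simp [← pow_two, Real.sq_sqrt (hA.eigenvalues_nonneg v)]
  have hs := hA.1.spectral_theorem
  rw [Unitary.conjStarAlgAut_apply] at hs
  simpa [C, this] using hs.symm

section Helpers

variable {k : Type*} [Fintype k]

lemma qf_conj (M S : Matrix k k ℝ) (w : k → ℝ) :
    (M *ᵥ (S *ᵥ w)) ⬝ᵥ (S *ᵥ w) = ((Sᵀ * M * S) *ᵥ w) ⬝ᵥ w := by
  rw [mulVec_mulVec, dotProduct_comm, dotProduct_mulVec, vecMul_mulVec,
    dotProduct_comm ((Sᵀ * M * S) *ᵥ w) w, dotProduct_mulVec, ← mul_assoc]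

lemma dot_self_mulVec (S : Matrix k k ℝ) (z : k → ℝ) :
    (S *ᵥ z) ⬝ᵥ (S *ᵥ z) = ((Sᵀ * S) *ᵥ z) ⬝ᵥ z := by
  rw [dotProduct_mulVec, vecMul_mulVec, dotProduct_comm ((Sᵀ * S) *ᵥ z) z,
    dotProduct_mulVec]

lemma psd_nonneg {M : Matrix k k ℝ} (hM : M.PosSemidef) (x : k → ℝ) :
    0 ≤ (M *ᵥ x) ⬝ᵥ x := by
  have h := hM.dotProduct_mulVec_nonneg x
  rw [dotProduct_comm]
  simpa using h

lemma dot_self_nonneg (v : k → ℝ) : 0 ≤ v ⬝ᵥ v :=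
  Finset.sum_nonneg fun i _ => mul_self_nonneg (v i)

lemma dot_self_pos {v : k → ℝ} (hv : v ≠ 0) : 0 < v ⬝ᵥ v :=
  (dot_self_nonneg v).lt_of_ne fun h => hv (dotProduct_self_eq_zero.mp h.symm)

lemma elim_dot {a b : Type*} [Fintype a] [Fintype b] (u x : a → ℝ) (v y : b → ℝ) :
    Sum.elim u v ⬝ᵥ Sum.elim x y = u ⬝ᵥ x + v ⬝ᵥ y := by
  simp [dotProduct, Fintype.sum_sum_type]

lemma dot_split {a b : Type*} [Fintype a] [Fintype b] (z w : a ⊕ b → ℝ) :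
    z ⬝ᵥ w = (z ∘ Sum.inl) ⬝ᵥ (w ∘ Sum.inl) + (z ∘ Sum.inr) ⬝ᵥ (w ∘ Sum.inr) := by
  simp [dotProduct, Fintype.sum_sum_type, Function.comp]

lemma herm_transpose {M : Matrix k k ℝ} (h : M.IsHermitian) : Mᵀ = M := by
  rw [← conjTranspose_eq_transpose_of_trivial]; exact h

lemma real_conjTranspose (M : Matrix k k ℝ) : Mᴴ = Mᵀ :=
  conjTranspose_eq_transpose_of_trivial M

lemma symm_eq_of_qf [DecidableEq k] {M : Matrix k k ℝ} (hsym : Mᵀ = M)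
    (h : ∀ v, (M *ᵥ v) ⬝ᵥ v = 0) : M = 0 := by
  have hbil : ∀ v w, (M *ᵥ v) ⬝ᵥ w = 0 := by
    intro v w
    have hvm : v ᵥ* M = M *ᵥ v := by rw [← vecMul_transpose, hsym]
    have hsw : (M *ᵥ w) ⬝ᵥ v = (M *ᵥ v) ⬝ᵥ w := by
      rw [dotProduct_comm ((M *ᵥ w)) v, dotProduct_mulVec, hvm]
    have h1 := h (v + w)
    rw [mulVec_add, add_dotProduct, dotProduct_add, dotProduct_add] at h1
    have h2 := h v
    have h3 := h w
    linarith [hsw, h1, h2, h3]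
  ext i j
  have := hbil (Pi.single j 1) (Pi.single i 1)
  simpa [mulVec_single, dotProduct_single] using this

lemma support_bound {hbar r : ℝ} (hh : 0 < hbar) (hr : 0 ≤ r)
    (S : Matrix k k ℝ) (c : k → ℝ)
    (hbound : ∀ w : k → ℝ, w ⬝ᵥ w ≤ hbar → (c ⬝ᵥ (S *ᵥ w)) ^ 2 ≤ hbar * r) :
    ((S * Sᵀ) *ᵥ c) ⬝ᵥ c ≤ r := by
  set u := Sᵀ *ᵥ c with hu
  have hqc : ((S * Sᵀ) *ᵥ c) ⬝ᵥ c = u ⬝ᵥ u := by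
    rw [← mulVec_mulVec, dotProduct_comm, dotProduct_mulVec, ← mulVec_transpose, ← hu]
  rcases eq_or_ne u 0 with hu0 | hu0
  · rw [hqc, hu0]; simpa using hr
  · have huu : 0 < u ⬝ᵥ u := dot_self_pos hu0
    set t := Real.sqrt (hbar / (u ⬝ᵥ u)) with ht
    have ht2 : t ^ 2 = hbar / (u ⬝ᵥ u) := Real.sq_sqrt (div_pos hh huu).le
    have hwball : (t • u) ⬝ᵥ (t • u) ≤ hbar := by
      rw [smul_dotProduct, dotProduct_smul, smul_eq_mul, smul_eq_mul, ← mul_assoc,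
        ← pow_two, ht2, div_mul_cancel₀ _ huu.ne']
    have hb := hbound (t • u) hwball
    have hcw : c ⬝ᵥ (S *ᵥ (t • u)) = t * (u ⬝ᵥ u) := by
      rw [dotProduct_mulVec, ← mulVec_transpose, ← hu, dotProduct_smul, smul_eq_mul]
    rw [hcw, mul_pow, ht2] at hb
    have h2 : hbar * (u ⬝ᵥ u) ≤ hbar * r := by
      have : hbar / (u ⬝ᵥ u) * (u ⬝ᵥ u) ^ 2 = hbar * (u ⬝ᵥ u) := by
        field_simp
      linarith [hb, this]
    rw [hqc]
    exact le_of_mul_le_mul_left h2 hh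

lemma cs_ineq [DecidableEq k] {A B : Matrix k k ℝ} (hBsym : Bᵀ = B)
    (hBB : B * B = A) (hBdet : IsUnit B.det) (v x : k → ℝ) :
    (v ⬝ᵥ x) ^ 2 ≤ ((A *ᵥ x) ⬝ᵥ x) * ((A⁻¹ *ᵥ v) ⬝ᵥ v) := by
  have hBinvsym : (B⁻¹)ᵀ = B⁻¹ := by rw [transpose_nonsing_inv, hBsym]
  have hAiBB : A⁻¹ = B⁻¹ * B⁻¹ := by rw [← hBB, Matrix.mul_inv_rev]
  set y := B *ᵥ x with hy
  set u := B⁻¹ *ᵥ v with hu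
  have hvx : v ⬝ᵥ x = u ⬝ᵥ y := by
    rw [hu, hy, dotProduct_mulVec, vecMul_mulVec, hBinvsym, nonsing_inv_mul B hBdet,
      vecMul_one]
  have hyy : y ⬝ᵥ y = (A *ᵥ x) ⬝ᵥ x := by
    rw [hy, dot_self_mulVec, hBsym, hBB]
  have huu : u ⬝ᵥ u = (A⁻¹ *ᵥ v) ⬝ᵥ v := by
    rw [hu, dot_self_mulVec, hBinvsym, ← hAiBB]
  have hcs : (u ⬝ᵥ y) ^ 2 ≤ (u ⬝ᵥ u) * (y ⬝ᵥ y) := by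
    have h := Finset.sum_mul_sq_le_sq_mul_sq Finset.univ u y
    simpa [dotProduct, pow_two] using h
  rw [hvx]
  calc (u ⬝ᵥ y) ^ 2 ≤ (u ⬝ᵥ u) * (y ⬝ᵥ y) := hcs
    _ = ((A *ᵥ x) ⬝ᵥ x) * ((A⁻¹ *ᵥ v) ⬝ᵥ v) := by rw [hyy, huu, mul_comm]

lemma qf_le_of_ball {hbar : ℝ} (hh : 0 < hbar) {M : Matrix k k ℝ}
    (h : ∀ w : k → ℝ, w ⬝ᵥ w ≤ hbar → (M *ᵥ w) ⬝ᵥ w ≤ hbar) (v : k → ℝ) :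
    (M *ᵥ v) ⬝ᵥ v ≤ v ⬝ᵥ v := by
  rcases eq_or_ne v 0 with rfl | hv
  · simp
  · have hvv : 0 < v ⬝ᵥ v := dot_self_pos hv
    set t := Real.sqrt (hbar / (v ⬝ᵥ v)) with ht
    have ht2 : t ^ 2 = hbar / (v ⬝ᵥ v) := Real.sq_sqrt (div_pos hh hvv).le
    have htpos : 0 < t ^ 2 := ht2 ▸ div_pos hh hvv
    have hwball : (t • v) ⬝ᵥ (t • v) ≤ hbar := by
      rw [smul_dotProduct, dotProduct_smul, smul_eq_mul, smul_eq_mul, ← mul_assoc,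
        ← pow_two, ht2, div_mul_cancel₀ _ hvv.ne']
    have hM := h (t • v) hwball
    rw [mulVec_smul, smul_dotProduct, dotProduct_smul, smul_eq_mul, smul_eq_mul,
      ← mul_assoc, ← pow_two] at hM
    have hbarval : hbar = t ^ 2 * (v ⬝ᵥ v) := by
      rw [ht2, div_mul_cancel₀ _ hvv.ne']
    rw [hbarval] at hM
    exact le_of_mul_le_mul_left hM htpos

end Helpers

section JFacts

variable {n : ℕ}

lemma negone_fromBlocks (n : ℕ) : (-1 : Matrix (Fin n ⊕ Fin n) (Fin n ⊕ Fin n) ℝ)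
    = fromBlocks (-1) 0 0 (-1) := by
  have h : (-1 : Matrix (Fin n ⊕ Fin n) (Fin n ⊕ Fin n) ℝ)
      = -(fromBlocks (1 : Matrix (Fin n) (Fin n) ℝ) 0 0 1) := by rw [fromBlocks_one]
  rw [h, fromBlocks_neg]
  simp

lemma Jmat_transpose (n : ℕ) : (Jmat n)ᵀ = -Jmat n := by
  rw [Jmat, fromBlocks_transpose, fromBlocks_neg]
  simp

lemma Jmat_mul_Jmat (n : ℕ) : Jmat n * Jmat n = -1 := by
  rw [Jmat, fromBlocks_multiply, negone_fromBlocks]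
  simp

lemma Jmat_det_isUnit (n : ℕ) : IsUnit (Jmat n).det := by
  have h2 : (Jmat n).det * (Jmat n).det
      = ((-1 : Matrix (Fin n ⊕ Fin n) (Fin n ⊕ Fin n) ℝ)).det := by
    rw [← det_mul, Jmat_mul_Jmat]
  have h3 : ((-1 : Matrix (Fin n ⊕ Fin n) (Fin n ⊕ Fin n) ℝ)).det = 1 := by
    have h4 : (-1 : Matrix (Fin n ⊕ Fin n) (Fin n ⊕ Fin n) ℝ)
        = -(1 : Matrix (Fin n ⊕ Fin n) (Fin n ⊕ Fin n) ℝ) := rfl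
    rw [h4, det_neg, det_one, mul_one, Fintype.card_sum, Fintype.card_fin, ← two_mul,
      pow_mul]
    norm_num
  exact IsUnit.of_mul_eq_one _ (h2.trans h3)

lemma qf_fromBlocks (A1 A2 : Matrix (Fin n) (Fin n) ℝ) (z : (Fin n ⊕ Fin n) → ℝ) :
    ((fromBlocks A1 0 0 A2) *ᵥ z) ⬝ᵥ z
      = (A1 *ᵥ (z ∘ Sum.inl)) ⬝ᵥ (z ∘ Sum.inl) + (A2 *ᵥ (z ∘ Sum.inr)) ⬝ᵥ (z ∘ Sum.inr) := by
  rw [fromBlocks_mulVec, dot_split]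
  simp

lemma qf_blocks_inl (P Q Q' R : Matrix (Fin n) (Fin n) ℝ) (v : Fin n → ℝ) :
    ((fromBlocks P Q Q' R) *ᵥ Sum.elim v 0) ⬝ᵥ Sum.elim v 0 = (P *ᵥ v) ⬝ᵥ v := by
  rw [fromBlocks_mulVec, dot_split]
  simp

lemma qf_blocks_inr (P Q Q' R : Matrix (Fin n) (Fin n) ℝ) (v : Fin n → ℝ) :
    ((fromBlocks P Q Q' R) *ᵥ Sum.elim 0 v) ⬝ᵥ Sum.elim 0 v = (R *ᵥ v) ⬝ᵥ v := by
  rw [fromBlocks_mulVec, dot_split]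
  simp

lemma Jmat_mulVec_inr (v : Fin n → ℝ) :
    Jmat n *ᵥ Sum.elim 0 v = Sum.elim v 0 := by
  rw [Jmat, fromBlocks_mulVec]
  funext i
  cases i <;> simp

lemma Jmat_mulVec_inl (v : Fin n → ℝ) :
    Jmat n *ᵥ Sum.elim v 0 = -(Sum.elim (0 : Fin n → ℝ) v) := by
  rw [Jmat, fromBlocks_mulVec]
  funext i
  cases i <;> simp [neg_mulVec]

end JFacts

lemma uniq {n : ℕ} {hbar : ℝ} (hhbar : 0 < hbar) {A : Matrix (Fin n) (Fin n) ℝ}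
    (hA : A.PosDef) (S : Matrix (Fin n ⊕ Fin n) (Fin n ⊕ Fin n) ℝ) (hS : IsSymplectic S)
    (hsub : S.mulVec '' ballh n hbar ⊆ prodXXh n hbar A) :
    S.mulVec '' ballh n hbar = OmegaA n hbar A := by
  -- basic facts about A and its square root
  set Bm := hA.posSemidef.sqrt with hBm
  have hBB : Bm * Bm = A := hA.posSemidef.sqrt_mul_self
  have hBsym : Bmᵀ = Bm := herm_transpose hA.posSemidef.posSemidef_sqrt.isHermitian
  have hAdet : IsUnit A.det := hA.det_pos.ne'.isUnit
  have hBdet : IsUnit Bm.det := by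
    have h : Bm.det * Bm.det = A.det := by rw [← det_mul, hBB]
    have h2 : Bm.det ≠ 0 := by
      intro h0
      rw [h0, mul_zero] at h
      exact hAdet.ne_zero h.symm
    exact h2.isUnit
  have hBinv1 : Bm⁻¹ * Bm = 1 := nonsing_inv_mul Bm hBdet
  have hBinv2 : Bm * Bm⁻¹ = 1 := mul_nonsing_inv Bm hBdet
  have hAinv1 : A⁻¹ * A = 1 := nonsing_inv_mul A hAdet
  have hAinv2 : A * A⁻¹ = 1 := mul_nonsing_inv A hAdet
  have hAsym : Aᵀ = A := herm_transpose hA.isHermitian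
  have hAinvsym : (A⁻¹)ᵀ = A⁻¹ := by rw [transpose_nonsing_inv, hAsym]
  have hAiBB : A⁻¹ = Bm⁻¹ * Bm⁻¹ := by rw [← hBB, Matrix.mul_inv_rev]
  have hBinvsym : (Bm⁻¹)ᵀ = Bm⁻¹ := by rw [transpose_nonsing_inv, hBsym]
  have hBinvdet : IsUnit Bm⁻¹.det := by
    have : Bm⁻¹.det * Bm.det = 1 := det_nonsing_inv_mul_det Bm hBdet
    exact IsUnit.of_mul_eq_one _ this
  -- S is invertible
  have hdetS : IsUnit S.det := by
    have h := congrArg Matrix.det hS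
    rw [det_mul, det_mul, det_transpose] at h
    have hJne : (Jmat n).det ≠ 0 := (Jmat_det_isUnit n).ne_zero
    have h2 : S.det * S.det * (Jmat n).det = 1 * (Jmat n).det := by
      rw [one_mul]
      calc S.det * S.det * (Jmat n).det = S.det * (Jmat n).det * S.det := by ring
        _ = (Jmat n).det := h
    have h3 : S.det * S.det = 1 := mul_right_cancel₀ hJne h2
    exact IsUnit.of_mul_eq_one _ h3
  have hSS1 : S⁻¹ * S = 1 := nonsing_inv_mul S hdetS
  have hSS2 : S * S⁻¹ = 1 := mul_nonsing_inv S hdetS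
  have hSTdet : IsUnit Sᵀ.det := by rwa [det_transpose]
  have hST1 : Sᵀ⁻¹ * Sᵀ = 1 := nonsing_inv_mul Sᵀ hSTdet
  have hST2 : Sᵀ * Sᵀ⁻¹ = 1 := mul_nonsing_inv Sᵀ hSTdet
  have hJJ := Jmat_mul_Jmat n
  -- S * J * Sᵀ = J
  have h2 : Sᵀ * Jmat n = Jmat n * S⁻¹ := by
    calc Sᵀ * Jmat n = Sᵀ * Jmat n * (S * S⁻¹) := by rw [hSS2, mul_one]
      _ = (Sᵀ * Jmat n * S) * S⁻¹ := by rw [mul_assoc, mul_assoc, mul_assoc]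
      _ = Jmat n * S⁻¹ := by rw [hS]
  have h3 : S * Jmat n * Sᵀ = Jmat n := by
    have h4 : S * Jmat n * Sᵀ * Jmat n = -1 := by
      calc S * Jmat n * Sᵀ * Jmat n = S * Jmat n * (Sᵀ * Jmat n) := by rw [mul_assoc]
        _ = S * Jmat n * (Jmat n * S⁻¹) := by rw [h2]
        _ = S * (Jmat n * Jmat n) * S⁻¹ := by noncomm_ring
        _ = -(S * S⁻¹) := by rw [hJJ]; noncomm_ring
        _ = -1 := by rw [hSS2]
    have h5 : Jmat n * (-Jmat n) = 1 := by rw [Matrix.mul_neg, hJJ, neg_neg]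
    calc S * Jmat n * Sᵀ = S * Jmat n * Sᵀ * (Jmat n * (-Jmat n)) := by rw [h5, mul_one]
      _ = (S * Jmat n * Sᵀ * Jmat n) * (-Jmat n) := by noncomm_ring
      _ = (-1 : Matrix _ _ ℝ) * (-Jmat n) := by rw [h4]
      _ = Jmat n := by simp
  -- Sigma = S * Sᵀ
  set Sig := S * Sᵀ with hSigdef
  have hSigsym : Sigᵀ = Sig := by rw [hSigdef, transpose_mul, transpose_transpose]
  have hSigdet : IsUnit Sig.det := by rw [hSigdef, det_mul, det_transpose]; exact hdetS.mul hdetS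
  have hSiginv : Sig⁻¹ = Sᵀ⁻¹ * S⁻¹ := by rw [hSigdef, Matrix.mul_inv_rev]
  have hSigJ : Sig * Jmat n * Sig = Jmat n := by
    have ha : Sig * Jmat n * Sig = S * (Sᵀ * Jmat n * S) * Sᵀ := by
      rw [hSigdef]; noncomm_ring
    rw [ha, hS, h3]
  have hSiginvJ : Sig⁻¹ = (Jmat n)ᵀ * Sig * Jmat n := by
    apply inv_eq_left_inv
    rw [Jmat_transpose]
    calc (-Jmat n * Sig * Jmat n) * Sig = -(Jmat n * (Sig * Jmat n * Sig)) := by noncomm_ring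
      _ = -(Jmat n * Jmat n) := by rw [hSigJ]
      _ = 1 := by rw [hJJ, neg_neg]
  -- consequences of the containment
  have hball : ∀ w : (Fin n ⊕ Fin n) → ℝ, w ⬝ᵥ w ≤ hbar →
      (A *ᵥ ((S *ᵥ w) ∘ Sum.inl)) ⬝ᵥ ((S *ᵥ w) ∘ Sum.inl) ≤ hbar ∧
      (A⁻¹ *ᵥ ((S *ᵥ w) ∘ Sum.inr)) ⬝ᵥ ((S *ᵥ w) ∘ Sum.inr) ≤ hbar := by
    intro w hw
    exact hsub ⟨w, hw, rfl⟩
  -- lower bounds:  G1 ≤ Sig⁻¹ and G2 ≤ Sig⁻¹ in the quadratic-form sense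
  set G1 : Matrix (Fin n ⊕ Fin n) (Fin n ⊕ Fin n) ℝ := fromBlocks A 0 0 0 with hG1def
  set G2 : Matrix (Fin n ⊕ Fin n) (Fin n ⊕ Fin n) ℝ := fromBlocks 0 0 0 A⁻¹ with hG2def
  have hb1 : ∀ w : (Fin n ⊕ Fin n) → ℝ, w ⬝ᵥ w ≤ hbar → ((Sᵀ * G1 * S) *ᵥ w) ⬝ᵥ w ≤ hbar := by
    intro w hw
    rw [← qf_conj, hG1def, qf_fromBlocks]
    simpa using (hball w hw).1
  have hb2 : ∀ w : (Fin n ⊕ Fin n) → ℝ, w ⬝ᵥ w ≤ hbar → ((Sᵀ * G2 * S) *ᵥ w) ⬝ᵥ w ≤ hbar := by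
    intro w hw
    rw [← qf_conj, hG2def, qf_fromBlocks]
    simpa using (hball w hw).2
  have hmat1 : (S⁻¹)ᵀ * (Sᵀ * G1 * S) * S⁻¹ = G1 := by
    rw [transpose_nonsing_inv]
    calc Sᵀ⁻¹ * (Sᵀ * G1 * S) * S⁻¹ = (Sᵀ⁻¹ * Sᵀ) * G1 * (S * S⁻¹) := by noncomm_ring
      _ = G1 := by rw [hST1, hSS2, one_mul, mul_one]
  have hmat2 : (S⁻¹)ᵀ * (Sᵀ * G2 * S) * S⁻¹ = G2 := by
    rw [transpose_nonsing_inv]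
    calc Sᵀ⁻¹ * (Sᵀ * G2 * S) * S⁻¹ = (Sᵀ⁻¹ * Sᵀ) * G2 * (S * S⁻¹) := by noncomm_ring
      _ = G2 := by rw [hST1, hSS2, one_mul, mul_one]
  have hSinvform : ∀ z : (Fin n ⊕ Fin n) → ℝ,
      (S⁻¹ *ᵥ z) ⬝ᵥ (S⁻¹ *ᵥ z) = (Sig⁻¹ *ᵥ z) ⬝ᵥ z := by
    intro z
    rw [dot_self_mulVec, transpose_nonsing_inv, ← hSiginv]
  have hE1 : ∀ z : (Fin n ⊕ Fin n) → ℝ, (G1 *ᵥ z) ⬝ᵥ z ≤ (Sig⁻¹ *ᵥ z) ⬝ᵥ z := by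
    intro z
    have h := qf_le_of_ball hhbar hb1 (S⁻¹ *ᵥ z)
    rw [qf_conj, hmat1, hSinvform] at h
    exact h
  have hE2 : ∀ z : (Fin n ⊕ Fin n) → ℝ, (G2 *ᵥ z) ⬝ᵥ z ≤ (Sig⁻¹ *ᵥ z) ⬝ᵥ z := by
    intro z
    have h := qf_le_of_ball hhbar hb2 (S⁻¹ *ᵥ z)
    rw [qf_conj, hmat2, hSinvform] at h
    exact h
  -- upper bounds via Cauchy-Schwarz / support functions
  have hU1 : ∀ v : Fin n → ℝ,
      (Sig *ᵥ Sum.elim v 0) ⬝ᵥ Sum.elim v 0 ≤ (A⁻¹ *ᵥ v) ⬝ᵥ v := by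
    intro v
    have hr : 0 ≤ (A⁻¹ *ᵥ v) ⬝ᵥ v := psd_nonneg hA.inv.posSemidef v
    refine support_bound hhbar hr S (Sum.elim v 0) ?_
    intro w hw
    have hx := (hball w hw).1
    have hcv : (Sum.elim v 0) ⬝ᵥ (S *ᵥ w) = v ⬝ᵥ ((S *ᵥ w) ∘ Sum.inl) := by
      rw [dot_split]
      simp
    rw [hcv]
    calc (v ⬝ᵥ ((S *ᵥ w) ∘ Sum.inl)) ^ 2
        ≤ ((A *ᵥ ((S *ᵥ w) ∘ Sum.inl)) ⬝ᵥ ((S *ᵥ w) ∘ Sum.inl)) * ((A⁻¹ *ᵥ v) ⬝ᵥ v) :=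
          cs_ineq hBsym hBB hBdet v _
      _ ≤ hbar * ((A⁻¹ *ᵥ v) ⬝ᵥ v) := mul_le_mul_of_nonneg_right hx hr
  have hU2 : ∀ v : Fin n → ℝ,
      (Sig *ᵥ Sum.elim 0 v) ⬝ᵥ Sum.elim 0 v ≤ (A *ᵥ v) ⬝ᵥ v := by
    intro v
    have hr : 0 ≤ (A *ᵥ v) ⬝ᵥ v := psd_nonneg hA.posSemidef v
    refine support_bound hhbar hr S (Sum.elim 0 v) ?_
    intro w hw
    have hx := (hball w hw).2
    have hcv : (Sum.elim 0 v) ⬝ᵥ (S *ᵥ w) = v ⬝ᵥ ((S *ᵥ w) ∘ Sum.inr) := by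
      rw [dot_split]
      simp
    rw [hcv]
    have hAA : (A⁻¹)⁻¹ = A := nonsing_inv_nonsing_inv A hAdet
    calc (v ⬝ᵥ ((S *ᵥ w) ∘ Sum.inr)) ^ 2
        ≤ ((A⁻¹ *ᵥ ((S *ᵥ w) ∘ Sum.inr)) ⬝ᵥ ((S *ᵥ w) ∘ Sum.inr)) * (((A⁻¹)⁻¹ *ᵥ v) ⬝ᵥ v) := by
          refine cs_ineq hBinvsym hAiBB.symm hBinvdet v _
      _ = ((A⁻¹ *ᵥ ((S *ᵥ w) ∘ Sum.inr)) ⬝ᵥ ((S *ᵥ w) ∘ Sum.inr)) * ((A *ᵥ v) ⬝ᵥ v) := by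
          rw [hAA]
      _ ≤ hbar * ((A *ᵥ v) ⬝ᵥ v) := mul_le_mul_of_nonneg_right hx hr
  -- lower bounds on the diagonal blocks of Sig
  have hF1 : ∀ v : Fin n → ℝ, (A⁻¹ *ᵥ v) ⬝ᵥ v ≤ (Sig *ᵥ Sum.elim v 0) ⬝ᵥ Sum.elim v 0 := by
    intro v
    have h := hE2 (Sum.elim 0 v)
    rw [hG2def, qf_blocks_inr] at h
    rw [hSiginvJ, ← qf_conj, Jmat_mulVec_inr] at h
    exact h
  have hF2 : ∀ v : Fin n → ℝ, (A *ᵥ v) ⬝ᵥ v ≤ (Sig *ᵥ Sum.elim 0 v) ⬝ᵥ Sum.elim 0 v := by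
    intro v
    have h := hE1 (Sum.elim v 0)
    rw [hG1def, qf_blocks_inl] at h
    rw [hSiginvJ, ← qf_conj, Jmat_mulVec_inl] at h
    rw [mulVec_neg, neg_dotProduct, dotProduct_neg, neg_neg] at h
    exact h
  -- blocks of Sig
  set P := Sig.toBlocks₁₁ with hP
  set Q := Sig.toBlocks₁₂ with hQ
  set Q' := Sig.toBlocks₂₁ with hQ'
  set R := Sig.toBlocks₂₂ with hR
  have hblocks : Sig = fromBlocks P Q Q' R := (fromBlocks_toBlocks Sig).symm
  have hsymblocks : fromBlocks Pᵀ Q'ᵀ Qᵀ Rᵀ = fromBlocks P Q Q' R := by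
    rw [← fromBlocks_transpose, ← hblocks, hSigsym, hblocks]
  have hPsym : Pᵀ = P := by
    have := congrArg Matrix.toBlocks₁₁ hsymblocks
    simpa [toBlocks_fromBlocks₁₁] using this
  have hRsym : Rᵀ = R := by
    have := congrArg Matrix.toBlocks₂₂ hsymblocks
    simpa [toBlocks_fromBlocks₂₂] using this
  have hQ'Q : Qᵀ = Q' := by
    have := congrArg Matrix.toBlocks₂₁ hsymblocks
    simpa [toBlocks_fromBlocks₂₁] using this
  -- identify diagonal blocks
  have hPA : P = A⁻¹ := by
    have h0 : ∀ v, ((P - A⁻¹) *ᵥ v) ⬝ᵥ v = 0 := by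
      intro v
      have hle := hU1 v
      have hge := hF1 v
      rw [hblocks, qf_blocks_inl] at hle hge
      rw [sub_mulVec, sub_dotProduct]
      linarith
    have hsym : (P - A⁻¹)ᵀ = P - A⁻¹ := by rw [transpose_sub, hPsym, hAinvsym]
    have := symm_eq_of_qf hsym h0
    exact sub_eq_zero.mp this
  have hRA : R = A := by
    have h0 : ∀ v, ((R - A) *ᵥ v) ⬝ᵥ v = 0 := by
      intro v
      have hle := hU2 v
      have hge := hF2 v
      rw [hblocks, qf_blocks_inr] at hle hge
      rw [sub_mulVec, sub_dotProduct]
      linarith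
    have hsym : (R - A)ᵀ = R - A := by rw [transpose_sub, hRsym, hAsym]
    have := symm_eq_of_qf hsym h0
    exact sub_eq_zero.mp this
  -- the off-diagonal block vanishes
  have hSigform : Sig = fromBlocks A⁻¹ Q Qᵀ A := by
    rw [hblocks, hPA, hRA, hQ'Q]
  have hSJ2 : (fromBlocks A⁻¹ Q Qᵀ A) * Jmat n * (fromBlocks A⁻¹ Q Qᵀ A) = Jmat n := by
    rw [← hSigform]; exact hSigJ
  rw [Jmat, fromBlocks_multiply, fromBlocks_multiply] at hSJ2
  have h12 := congrArg Matrix.toBlocks₁₂ hSJ2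
  have h11 := congrArg Matrix.toBlocks₁₁ hSJ2
  simp only [toBlocks_fromBlocks₁₂, toBlocks_fromBlocks₁₁, Matrix.mul_zero, Matrix.zero_mul,
    Matrix.mul_one, Matrix.one_mul, Matrix.mul_neg, Matrix.neg_mul, add_zero, zero_add] at h12 h11
  -- h12 : -(Q * Q) + A⁻¹ * A = 1 ;  h11 : -(Q * A⁻¹) + A⁻¹ * Qᵀ = 0
  have hQQ : Q * Q = 0 := by
    rw [hAinv1] at h12
    have := h12
    calc Q * Q = -(-(Q * Q) + 1) + 1 := by abel
      _ = -(1 : Matrix (Fin n) (Fin n) ℝ) + 1 := by rw [this]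
      _ = 0 := by simp
  have hQT : Qᵀ = A * Q * A⁻¹ := by
    have h : A⁻¹ * Qᵀ = Q * A⁻¹ := by
      calc A⁻¹ * Qᵀ = -(Q * A⁻¹) + A⁻¹ * Qᵀ + Q * A⁻¹ := by abel
        _ = 0 + Q * A⁻¹ := by rw [h11]
        _ = Q * A⁻¹ := by rw [zero_add]
    calc Qᵀ = (A * A⁻¹) * Qᵀ := by rw [hAinv2, one_mul]
      _ = A * (A⁻¹ * Qᵀ) := by rw [mul_assoc]
      _ = A * (Q * A⁻¹) := by rw [h]
      _ = A * Q * A⁻¹ := by rw [mul_assoc]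
  set N := Bm * Q * Bm⁻¹ with hN
  have hNsym : Nᵀ = N := by
    have h1 : Nᵀ = Bm⁻¹ * Qᵀ * Bm := by
      rw [hN, transpose_mul, transpose_mul, hBsym, hBinvsym, mul_assoc]
    rw [h1, hQT, hAiBB, ← hBB]
    calc Bm⁻¹ * (Bm * Bm * Q * (Bm⁻¹ * Bm⁻¹)) * Bm
        = (Bm⁻¹ * Bm) * (Bm * Q * Bm⁻¹) * (Bm⁻¹ * Bm) := by noncomm_ring
      _ = Bm * Q * Bm⁻¹ := by rw [hBinv1, one_mul, mul_one]
  have hNN : N * N = 0 := by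
    calc N * N = Bm * (Q * ((Bm⁻¹ * Bm) * Q)) * Bm⁻¹ := by rw [hN]; noncomm_ring
      _ = Bm * (Q * Q) * Bm⁻¹ := by rw [hBinv1, one_mul]
      _ = 0 := by rw [hQQ, Matrix.mul_zero, Matrix.zero_mul]
  have hN0 : N = 0 := by
    have h' : Nᴴ * N = 0 := by rw [real_conjTranspose, hNsym, hNN]
    exact conjTranspose_mul_self_eq_zero.mp h'
  have hQ0 : Q = 0 := by
    have h : Bm⁻¹ * N * Bm = Q := by
      calc Bm⁻¹ * N * Bm = (Bm⁻¹ * Bm) * Q * (Bm⁻¹ * Bm) := by rw [hN]; noncomm_ring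
        _ = Q := by rw [hBinv1, one_mul, mul_one]
    rw [← h, hN0, Matrix.mul_zero, Matrix.zero_mul]
  have hSigval : Sig = fromBlocks A⁻¹ 0 0 A := by
    rw [hSigform, hQ0, transpose_zero]
  have hSiginvval : Sig⁻¹ = fromBlocks A 0 0 A⁻¹ := by
    apply inv_eq_left_inv
    rw [hSigval, fromBlocks_multiply]
    simp [hAinv1, hAinv2, fromBlocks_one]
  -- conclude
  ext z
  constructor
  · rintro ⟨w, hw, rfl⟩
    have hw' : w ⬝ᵥ w ≤ hbar := hw
    show (A *ᵥ ((S *ᵥ w) ∘ Sum.inl)) ⬝ᵥ ((S *ᵥ w) ∘ Sum.inl)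
        + (A⁻¹ *ᵥ ((S *ᵥ w) ∘ Sum.inr)) ⬝ᵥ ((S *ᵥ w) ∘ Sum.inr) ≤ hbar
    rw [← qf_fromBlocks, ← hSiginvval, qf_conj]
    have hone : Sᵀ * Sig⁻¹ * S = 1 := by
      rw [hSiginv]
      calc Sᵀ * (Sᵀ⁻¹ * S⁻¹) * S = (Sᵀ * Sᵀ⁻¹) * (S⁻¹ * S) := by noncomm_ring
        _ = 1 := by rw [hST2, hSS1, one_mul]
    rw [hone, one_mulVec]
    exact hw'
  · intro hz
    have hz' : (A *ᵥ (z ∘ Sum.inl)) ⬝ᵥ (z ∘ Sum.inl)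
        + (A⁻¹ *ᵥ (z ∘ Sum.inr)) ⬝ᵥ (z ∘ Sum.inr) ≤ hbar := hz
    refine ⟨S⁻¹ *ᵥ z, ?_, ?_⟩
    · show (S⁻¹ *ᵥ z) ⬝ᵥ (S⁻¹ *ᵥ z) ≤ hbar
      rw [hSinvform, hSiginvval, qf_fromBlocks]
      exact hz'
    · rw [mulVec_mulVec, hSS2, one_mulVec]

/-- the product `X × X^ħ` of the ellipsoid `X = {x : ⟨Ax,x⟩ ≤ ħ}` with its
quantum polar dual contains exactly one quantum blob, namely
`Ω_A = {(x,p) : ⟨Ax,x⟩ + ⟨A⁻¹p,p⟩ ≤ ħ} = S_A(B²ⁿ(√ħ))`; moreover the orthogonal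
projections of `Ω_A` onto the two factors `ℝⁿ` are exactly `X` and `X^ħ`. -/
theorem statement10 (n : ℕ) (hbar : ℝ) (hhbar : 0 < hbar)
    (A : Matrix (Fin n) (Fin n) ℝ) (hA : A.PosDef) :
    IsSymplectic (SA A hA) ∧
    OmegaA n hbar A = (SA A hA).mulVec '' ballh n hbar ∧
    OmegaA n hbar A ⊆ prodXXh n hbar A ∧
    (∀ S : Matrix (Fin n ⊕ Fin n) (Fin n ⊕ Fin n) ℝ, IsSymplectic S →
      S.mulVec '' ballh n hbar ⊆ prodXXh n hbar A →
      S.mulVec '' ballh n hbar = OmegaA n hbar A) ∧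
    (fun z : (Fin n ⊕ Fin n) → ℝ => z ∘ Sum.inl) '' OmegaA n hbar A
      = {x : Fin n → ℝ | A.mulVec x ⬝ᵥ x ≤ hbar} ∧
    (fun z : (Fin n ⊕ Fin n) → ℝ => z ∘ Sum.inr) '' OmegaA n hbar A
      = {p : Fin n → ℝ | A⁻¹.mulVec p ⬝ᵥ p ≤ hbar} := by
  have hBB : hA.posSemidef.sqrt * hA.posSemidef.sqrt = A := hA.posSemidef.sqrt_mul_self
  set Bm := hA.posSemidef.sqrt with hBm
  have hBsym : Bmᵀ = Bm := herm_transpose hA.posSemidef.posSemidef_sqrt.isHermitian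
  have hAdet : IsUnit A.det := hA.det_pos.ne'.isUnit
  have hBdet : IsUnit Bm.det := by
    have h : Bm.det * Bm.det = A.det := by rw [← det_mul, hBB]
    have h2 : Bm.det ≠ 0 := by
      intro h0
      rw [h0, mul_zero] at h
      exact hAdet.ne_zero h.symm
    exact h2.isUnit
  have hBinv1 : Bm⁻¹ * Bm = 1 := nonsing_inv_mul Bm hBdet
  have hBinv2 : Bm * Bm⁻¹ = 1 := mul_nonsing_inv Bm hBdet
  have hAiBB : A⁻¹ = Bm⁻¹ * Bm⁻¹ := by rw [← hBB, Matrix.mul_inv_rev]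
  have hBinvsym : (Bm⁻¹)ᵀ = Bm⁻¹ := by rw [transpose_nonsing_inv, hBsym]
  -- part 1 : SA is symplectic
  have hsymp : IsSymplectic (SA A hA) := by
    show (SA A hA)ᵀ * Jmat n * SA A hA = Jmat n
    rw [SA, Jmat, ← hBm, fromBlocks_transpose, fromBlocks_multiply, fromBlocks_multiply]
    rw [hBinvsym, hBsym]
    simp only [Matrix.mul_zero, Matrix.zero_mul, Matrix.mul_one, Matrix.one_mul,
      Matrix.mul_neg, Matrix.neg_mul, add_zero, zero_add, transpose_zero]
    rw [hBinv1, hBinv2]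
    simp
  -- SA image is inside the product
  have hSAsub : (SA A hA).mulVec '' ballh n hbar ⊆ prodXXh n hbar A := by
    rintro z ⟨w, hw, rfl⟩
    have hw' : w ⬝ᵥ w ≤ hbar := hw
    have hz : SA A hA *ᵥ w = Sum.elim (Bm⁻¹ *ᵥ (w ∘ Sum.inl)) (Bm *ᵥ (w ∘ Sum.inr)) := by
      rw [SA, ← hBm, fromBlocks_mulVec]
      simp
    have hwsplit : w ⬝ᵥ w = (w ∘ Sum.inl) ⬝ᵥ (w ∘ Sum.inl) + (w ∘ Sum.inr) ⬝ᵥ (w ∘ Sum.inr) :=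
      dot_split w w
    have h1 : (A *ᵥ (Bm⁻¹ *ᵥ (w ∘ Sum.inl))) ⬝ᵥ (Bm⁻¹ *ᵥ (w ∘ Sum.inl))
        = (w ∘ Sum.inl) ⬝ᵥ (w ∘ Sum.inl) := by
      rw [qf_conj, hBinvsym]
      have hm : Bm⁻¹ * A * Bm⁻¹ = 1 := by
        rw [← hBB, ← mul_assoc, hBinv1, one_mul, hBinv2]
      rw [hm, one_mulVec]
    have h2 : (A⁻¹ *ᵥ (Bm *ᵥ (w ∘ Sum.inr))) ⬝ᵥ (Bm *ᵥ (w ∘ Sum.inr))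
        = (w ∘ Sum.inr) ⬝ᵥ (w ∘ Sum.inr) := by
      rw [qf_conj, hBsym]
      have hm : Bm * A⁻¹ * Bm = 1 := by
        rw [hAiBB, ← mul_assoc, hBinv2, one_mul, hBinv1]
      rw [hm, one_mulVec]
    have hn1 : 0 ≤ (w ∘ Sum.inl) ⬝ᵥ (w ∘ Sum.inl) := dot_self_nonneg _
    have hn2 : 0 ≤ (w ∘ Sum.inr) ⬝ᵥ (w ∘ Sum.inr) := dot_self_nonneg _
    constructor
    · show (A *ᵥ ((SA A hA *ᵥ w) ∘ Sum.inl)) ⬝ᵥ ((SA A hA *ᵥ w) ∘ Sum.inl) ≤ hbar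
      rw [hz, Sum.elim_comp_inl, h1]
      linarith
    · show (A⁻¹ *ᵥ ((SA A hA *ᵥ w) ∘ Sum.inr)) ⬝ᵥ ((SA A hA *ᵥ w) ∘ Sum.inr) ≤ hbar
      rw [hz, Sum.elim_comp_inr, h2]
      linarith
  have huniq : ∀ S : Matrix (Fin n ⊕ Fin n) (Fin n ⊕ Fin n) ℝ, IsSymplectic S →
      S.mulVec '' ballh n hbar ⊆ prodXXh n hbar A →
      S.mulVec '' ballh n hbar = OmegaA n hbar A := fun S hS hsub => uniq hhbar hA S hS hsub
  have hpart2 : OmegaA n hbar A = (SA A hA).mulVec '' ballh n hbar :=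
    (huniq (SA A hA) hsymp hSAsub).symm
  have hOsub : OmegaA n hbar A ⊆ prodXXh n hbar A := by
    rw [hpart2]; exact hSAsub
  refine ⟨hsymp, hpart2, hOsub, huniq, ?_, ?_⟩
  · ext x
    constructor
    · rintro ⟨z, hz, rfl⟩
      have hz' : (A *ᵥ (z ∘ Sum.inl)) ⬝ᵥ (z ∘ Sum.inl)
          + (A⁻¹ *ᵥ (z ∘ Sum.inr)) ⬝ᵥ (z ∘ Sum.inr) ≤ hbar := hz
      have h2 : 0 ≤ (A⁻¹ *ᵥ (z ∘ Sum.inr)) ⬝ᵥ (z ∘ Sum.inr) :=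
        psd_nonneg hA.inv.posSemidef _
      show (A *ᵥ (z ∘ Sum.inl)) ⬝ᵥ (z ∘ Sum.inl) ≤ hbar
      linarith
    · intro hx
      have hx' : (A *ᵥ x) ⬝ᵥ x ≤ hbar := hx
      refine ⟨Sum.elim x 0, ?_, ?_⟩
      · show (A *ᵥ (Sum.elim x 0 ∘ Sum.inl)) ⬝ᵥ (Sum.elim x 0 ∘ Sum.inl)
            + (A⁻¹ *ᵥ (Sum.elim x 0 ∘ Sum.inr)) ⬝ᵥ (Sum.elim x 0 ∘ Sum.inr) ≤ hbar
        rw [Sum.elim_comp_inl, Sum.elim_comp_inr, mulVec_zero, dotProduct_zero, add_zero]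
        exact hx'
      · show Sum.elim x 0 ∘ Sum.inl = x
        exact Sum.elim_comp_inl x 0
  · ext p
    constructor
    · rintro ⟨z, hz, rfl⟩
      have hz' : (A *ᵥ (z ∘ Sum.inl)) ⬝ᵥ (z ∘ Sum.inl)
          + (A⁻¹ *ᵥ (z ∘ Sum.inr)) ⬝ᵥ (z ∘ Sum.inr) ≤ hbar := hz
      have h2 : 0 ≤ (A *ᵥ (z ∘ Sum.inl)) ⬝ᵥ (z ∘ Sum.inl) :=
        psd_nonneg hA.posSemidef _
      show (A⁻¹ *ᵥ (z ∘ Sum.inr)) ⬝ᵥ (z ∘ Sum.inr) ≤ hbar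
      linarith
    · intro hp
      have hp' : (A⁻¹ *ᵥ p) ⬝ᵥ p ≤ hbar := hp
      refine ⟨Sum.elim 0 p, ?_, ?_⟩
      · show (A *ᵥ (Sum.elim 0 p ∘ Sum.inl)) ⬝ᵥ (Sum.elim 0 p ∘ Sum.inl)
            + (A⁻¹ *ᵥ (Sum.elim 0 p ∘ Sum.inr)) ⬝ᵥ (Sum.elim 0 p ∘ Sum.inr) ≤ hbar
        rw [Sum.elim_comp_inl, Sum.elim_comp_inr, mulVec_zero, dotProduct_zero, zero_add]
        exact hp'
      · show Sum.elim (0 : Fin n → ℝ) p ∘ Sum.inr = p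
        exact Sum.elim_comp_inr (0 : Fin n → ℝ) p
end

section
/- Let W and Y be real symmetric n×n matrices with W positive definite, and let φ_{WY}(x) = (πħ)^{−n/4} (det W)^{1/4} exp(−⟨(W+iY)x, x⟩/(2ħ)) be the corresponding Gaussian on ℝⁿ. Then its Wigner transform Wφ_{WY}(x,p) := (2πħ)^{−n} ∫_{ℝⁿ} e^{−i⟨p,y⟩/ħ} φ_{WY}(x + y/2) \overline{φ_{WY}(x − y/2)} dy equals (πħ)^{−n} exp(−⟨Gz, z⟩/ħ), where z = (x,p) and G is the block matrix G = [[W + Y W⁻¹ Y, Y W⁻¹],[W⁻¹ Y, W⁻¹]]. -/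
open Matrix MeasureTheory

lemma swap_symm {n : ℕ} {R : Type*} [CommRing R] {A : Matrix (Fin n) (Fin n) R} (hA : Aᵀ = A)
    (u v : Fin n → R) : A *ᵥ u ⬝ᵥ v = A *ᵥ v ⬝ᵥ u := by
  rw [dotProduct_comm, dotProduct_mulVec, ← mulVec_transpose, hA]

lemma cast_dot {n : ℕ} (u v : Fin n → ℝ) :
    ((u ⬝ᵥ v : ℝ) : ℂ) = (fun i => (u i : ℂ)) ⬝ᵥ (fun i => (v i : ℂ)) := by
  simp [dotProduct]

lemma cast_mulVec_dot {n : ℕ} (A : Matrix (Fin n) (Fin n) ℝ) (u v : Fin n → ℝ) :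
    ((A *ᵥ u ⬝ᵥ v : ℝ) : ℂ)
      = (A.map Complex.ofReal) *ᵥ (fun i => (u i : ℂ)) ⬝ᵥ (fun i => (v i : ℂ)) := by
  simp [dotProduct, mulVec, Matrix.map_apply, Finset.sum_mul]

-- block identity
lemma block_id {n : ℕ} (W Y : Matrix (Fin n) (Fin n) ℝ) (hWt : Wᵀ = W) (hYt : Yᵀ = Y)
    (hWinvt : (W⁻¹)ᵀ = W⁻¹) (x p : Fin n → ℝ) :
    (Matrix.fromBlocks (W + Y * W⁻¹ * Y) (Y * W⁻¹) (W⁻¹ * Y) W⁻¹) *ᵥ (Sum.elim x p)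
        ⬝ᵥ Sum.elim x p
      = W *ᵥ x ⬝ᵥ x + W⁻¹ *ᵥ (Y *ᵥ x + p) ⬝ᵥ (Y *ᵥ x + p) := by
  rw [fromBlocks_mulVec, sumElim_dotProduct_sumElim]
  simp only [Sum.elim_comp_inl, Sum.elim_comp_inr]
  simp only [← mulVec_mulVec, mulVec_add, add_mulVec, dotProduct_add, add_dotProduct]
  rw [swap_symm hYt (W⁻¹ *ᵥ (Y *ᵥ x)) x, swap_symm hYt (W⁻¹ *ᵥ p) x,
    dotProduct_comm (Y *ᵥ x) (W⁻¹ *ᵥ (Y *ᵥ x)), dotProduct_comm (Y *ᵥ x) (W⁻¹ *ᵥ p)]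
  ring

lemma const_id {n : ℕ} {hbar d : ℝ} (hh : 0 < hbar) (hd : 0 < d) :
    (2 * Real.pi * hbar) ^ (-(n : ℝ)) *
      ((Real.pi * hbar) ^ (-(n : ℝ) / 4) * d ^ ((1 : ℝ) / 4)) ^ 2 *
      ((4 * Real.pi * hbar) ^ ((n : ℝ) / 2) / Real.sqrt d)
    = (Real.pi * hbar) ^ (-(n : ℝ)) := by
  have hπ : 0 < Real.pi := Real.pi_pos
  have h1 : 0 < 2 * Real.pi * hbar := by positivity
  have h2 : 0 < Real.pi * hbar := by positivity
  have h3 : 0 < 4 * Real.pi * hbar := by positivity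
  rw [Real.sqrt_eq_rpow]
  rw [Real.rpow_def_of_pos h1, Real.rpow_def_of_pos h2, Real.rpow_def_of_pos hd,
    Real.rpow_def_of_pos h3, Real.rpow_def_of_pos hd, Real.rpow_def_of_pos h2]
  rw [← Real.exp_add, pow_two, ← Real.exp_add, ← Real.exp_add, ← Real.exp_sub, ← Real.exp_add]
  congr 1
  have e1 : Real.log (2 * Real.pi * hbar) = Real.log 2 + Real.log Real.pi + Real.log hbar := by
    rw [Real.log_mul (by positivity) hh.ne', Real.log_mul two_ne_zero hπ.ne']
  have e2 : Real.log (Real.pi * hbar) = Real.log Real.pi + Real.log hbar :=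
    Real.log_mul hπ.ne' hh.ne'
  have e3 : Real.log (4 * Real.pi * hbar)
      = 2 * Real.log 2 + Real.log Real.pi + Real.log hbar := by
    rw [Real.log_mul (by positivity) hh.ne', Real.log_mul (by norm_num) hπ.ne',
      show (4:ℝ) = 2 * 2 by norm_num, Real.log_mul two_ne_zero two_ne_zero]
    ring
  rw [e1, e2, e3]
  ring

lemma expo_id {n : ℕ} (hbar : ℂ) {A B : Matrix (Fin n) (Fin n) ℂ}
    (hA : Aᵀ = A) (hB : Bᵀ = B) (a b c : Fin n → ℂ) :
    -(Complex.I * (c ⬝ᵥ b)) / hbar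
      + -((A + Complex.I • B) *ᵥ (a + (2⁻¹ : ℂ) • b) ⬝ᵥ (a + (2⁻¹ : ℂ) • b)) / (2 * hbar)
      + -((A - Complex.I • B) *ᵥ (a - (2⁻¹ : ℂ) • b) ⬝ᵥ (a - (2⁻¹ : ℂ) • b)) / (2 * hbar)
    = -(A *ᵥ a ⬝ᵥ a) / hbar
      + (-(A *ᵥ b ⬝ᵥ b) / (4 * hbar) - Complex.I * ((B *ᵥ a + c) ⬝ᵥ b) / hbar) := by
  simp only [add_mulVec, sub_mulVec, mulVec_add, mulVec_sub, mulVec_smul, smul_mulVec,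
    add_dotProduct, sub_dotProduct, smul_dotProduct, dotProduct_add, dotProduct_sub,
    dotProduct_smul, smul_eq_mul]
  rw [swap_symm hA b a, swap_symm hB b a]
  simp only [div_eq_mul_inv, mul_inv]
  ring

lemma cast_vec_mulVec {n : ℕ} (A : Matrix (Fin n) (Fin n) ℝ) (u : Fin n → ℝ) :
    (fun i => ((A *ᵥ u) i : ℂ)) = (A.map Complex.ofReal) *ᵥ (fun i => (u i : ℂ)) := by
  funext i
  simp [mulVec, dotProduct, Matrix.map_apply]

lemma conj_dot {n : ℕ} (W Y : Matrix (Fin n) (Fin n) ℝ) (v : Fin n → ℝ) :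
    (starRingEnd ℂ) ((W.map Complex.ofReal + Complex.I • Y.map Complex.ofReal) *ᵥ
        (fun i => (v i : ℂ)) ⬝ᵥ (fun i => (v i : ℂ)))
      = (W.map Complex.ofReal - Complex.I • Y.map Complex.ofReal) *ᵥ
        (fun i => (v i : ℂ)) ⬝ᵥ (fun i => (v i : ℂ)) := by
  simp only [mulVec, dotProduct, map_sum, _root_.map_mul, map_add, Matrix.add_apply,
    Matrix.sub_apply, Matrix.smul_apply, Matrix.map_apply, Complex.conj_ofReal, Complex.conj_I,
    smul_eq_mul]
  refine Finset.sum_congr rfl fun i _ => ?_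
  congr 1
  refine Finset.sum_congr rfl fun j _ => ?_
  ring

lemma dot_conj {n : ℕ} {R : Type*} [CommRing R] (A M : Matrix (Fin n) (Fin n) R) (u : Fin n → R) :
    A *ᵥ (M *ᵥ u) ⬝ᵥ (M *ᵥ u) = (Mᵀ * (A * M)) *ᵥ u ⬝ᵥ u := by
  rw [mulVec_mulVec, dotProduct_mulVec, ← mulVec_transpose, mulVec_mulVec]

open scoped MatrixOrder in
lemma gauss_integral {n : ℕ} {hbar : ℝ} (hh : 0 < hbar) (W : Matrix (Fin n) (Fin n) ℝ)
    (hW : W.PosDef) (b : Fin n → ℝ) :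
    ∫ y : Fin n → ℝ, Complex.exp (-((W *ᵥ y ⬝ᵥ y : ℝ) : ℂ) / (4 * hbar)
        - Complex.I * ((b ⬝ᵥ y : ℝ) : ℂ) / hbar)
      = (((4 * Real.pi * hbar) ^ ((n : ℝ) / 2) / Real.sqrt W.det : ℝ) : ℂ) *
          Complex.exp (-((W⁻¹ *ᵥ b ⬝ᵥ b : ℝ) : ℂ) / hbar) := by
  have hWt : Wᵀ = W := by
    have := hW.isHermitian
    rwa [Matrix.IsHermitian, conjTranspose_eq_transpose_of_trivial] at this
  set S := CFC.sqrt W with hSdef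
  have hS : S * S = W := CFC.sqrt_mul_sqrt_self W hW.posSemidef.nonneg
  have hSt : Sᵀ = S := by
    have := (CFC.sqrt_nonneg W).posSemidef.isHermitian
    rwa [Matrix.IsHermitian, conjTranspose_eq_transpose_of_trivial] at this
  have hdetW : 0 < W.det := hW.det_pos
  have hdS : S.det * S.det = W.det := by rw [← det_mul, hS]
  have hdSne : S.det ≠ 0 := by
    intro h; rw [h, zero_mul] at hdS; exact hdetW.ne' hdS.symm
  have hu : IsUnit S.det := isUnit_iff_ne_zero.mpr hdSne
  have habs : |S.det| = Real.sqrt W.det := by rw [← hdS, ← sq, Real.sqrt_sq_eq_abs]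
  have hSinv : S⁻¹ * S⁻¹ = W⁻¹ := by rw [← Matrix.mul_inv_rev, hS]
  have hSinvt : (S⁻¹)ᵀ = S⁻¹ := by rw [Matrix.transpose_nonsing_inv, hSt]
  have hone : S⁻¹ * (W * S⁻¹) = 1 := by
    rw [← hS, Matrix.mul_assoc, Matrix.mul_nonsing_inv _ hu, Matrix.mul_one,
      Matrix.nonsing_inv_mul _ hu]
  set g : (Fin n → ℝ) → ℂ := fun y => Complex.exp (-((W *ᵥ y ⬝ᵥ y : ℝ) : ℂ) / (4 * hbar)
        - Complex.I * ((b ⬝ᵥ y : ℝ) : ℂ) / hbar) with hgdef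
  have cq : Continuous fun y : Fin n → ℝ => W *ᵥ y ⬝ᵥ y :=
    (continuous_const.matrix_mulVec continuous_id).dotProduct continuous_id
  have cl : Continuous fun y : Fin n → ℝ => b ⬝ᵥ y :=
    continuous_const.dotProduct continuous_id
  have hg : Continuous g :=
    Complex.continuous_exp.comp
      (((Complex.continuous_ofReal.comp cq).neg.div_const _).sub
        ((continuous_const.mul (Complex.continuous_ofReal.comp cl)).div_const _))
  set T : (Fin n → ℝ) →ₗ[ℝ] (Fin n → ℝ) := Matrix.toLin' S⁻¹ with hTdef
  have hTdet : LinearMap.det T = S.det⁻¹ := by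
    rw [hTdef, LinearMap.det_toLin', Matrix.det_nonsing_inv, Ring.inverse_eq_inv]
  have hTne : LinearMap.det T ≠ 0 := by rw [hTdet]; exact inv_ne_zero hdSne
  have hmap := Real.map_linearMap_volume_pi_eq_smul_volume_pi hTne
  have hTcont : Continuous T := LinearMap.continuous_of_finiteDimensional T
  have h1 : ∫ u, g (T u) = |S.det| * ∫ y, g y := by
    rw [← integral_map hTcont.aemeasurable hg.aestronglyMeasurable, hmap,
      integral_smul_measure, hTdet, inv_inv, ENNReal.toReal_ofReal (abs_nonneg _), Complex.real_smul]
  set w : Fin n → ℝ := S⁻¹ *ᵥ b with hwdef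
  have hww : w ⬝ᵥ w = W⁻¹ *ᵥ b ⬝ᵥ b := by
    rw [hwdef, dotProduct_mulVec, ← mulVec_transpose, hSinvt, mulVec_mulVec, hSinv]
  have hgT : ∀ u : Fin n → ℝ, g (T u) =
      Complex.exp (-(((4 * hbar)⁻¹ : ℝ) : ℂ) * ∑ i, (u i : ℂ) ^ 2
        + ∑ i, (-(Complex.I * (w i : ℂ)) / hbar) * (u i : ℂ)) := by
    intro u
    have hTu : T u = S⁻¹ *ᵥ u := Matrix.toLin'_apply _ _
    have e1 : W *ᵥ (S⁻¹ *ᵥ u) ⬝ᵥ (S⁻¹ *ᵥ u) = u ⬝ᵥ u := by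
      rw [dot_conj, hSinvt, hone, Matrix.one_mulVec]
    have e2 : b ⬝ᵥ (S⁻¹ *ᵥ u) = w ⬝ᵥ u := by
      rw [dotProduct_mulVec, ← mulVec_transpose, hSinvt]
    rw [hgdef]
    simp only [hTu, e1, e2]
    congr 1
    push_cast [dotProduct]
    simp only [sub_eq_add_neg, neg_mul, neg_div, Finset.mul_sum, Finset.sum_div, mul_div_assoc,
      ← Finset.sum_neg_distrib, ← Finset.sum_add_distrib]
    refine Finset.sum_congr rfl fun i _ => by field_simp
  have hβ : (0:ℝ) < (4 * hbar)⁻¹ := by positivity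
  have key := GaussianFourier.integral_cexp_neg_mul_sum_add
    (b := (((4 * hbar)⁻¹ : ℝ) : ℂ)) (by simpa using hβ)
    (fun i => -(Complex.I * (w i : ℂ)) / hbar)
  have hhc : (hbar : ℂ) ≠ 0 := Complex.ofReal_ne_zero.mpr hh.ne'
  have hc2 : (∑ i, (-(Complex.I * (w i : ℂ)) / hbar) ^ 2)
      = -((W⁻¹ *ᵥ b ⬝ᵥ b : ℝ) : ℂ) / hbar ^ 2 := by
    rw [← hww]
    push_cast [dotProduct]
    have hterm : ∀ i : Fin n, (-(Complex.I * (w i : ℂ)) / hbar) ^ 2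
        = -((w i : ℂ) * w i) / (hbar : ℂ) ^ 2 := by
      intro i
      rw [div_pow, neg_sq, mul_pow, Complex.I_sq]
      ring
    simp_rw [hterm]
    rw [← Finset.sum_div, Finset.sum_neg_distrib]
  have hexp : -((W⁻¹ *ᵥ b ⬝ᵥ b : ℝ) : ℂ) / hbar ^ 2 / (4 * (((4 * hbar)⁻¹ : ℝ) : ℂ))
      = -((W⁻¹ *ᵥ b ⬝ᵥ b : ℝ) : ℂ) / hbar := by
    push_cast
    field_simp
  have hpow : ((Real.pi : ℂ) / (((4 * hbar)⁻¹ : ℝ) : ℂ)) ^ ((Fintype.card (Fin n) : ℂ) / 2)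
      = (((4 * Real.pi * hbar) ^ ((n : ℝ) / 2) : ℝ) : ℂ) := by
    have hb : (0:ℝ) ≤ 4 * Real.pi * hbar := by positivity
    have h4 : (Real.pi : ℂ) / (((4 * hbar)⁻¹ : ℝ) : ℂ) = ((4 * Real.pi * hbar : ℝ) : ℂ) := by
      push_cast
      field_simp
    rw [h4, Complex.ofReal_cpow hb]
    norm_num
  have h2 : ∫ u, g (T u)
      = (((4 * Real.pi * hbar) ^ ((n : ℝ) / 2) : ℝ) : ℂ)
        * Complex.exp (-((W⁻¹ *ᵥ b ⬝ᵥ b : ℝ) : ℂ) / hbar) := by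
    simp_rw [hgT]
    rw [key, hc2, hexp, hpow]
  have hsq : Real.sqrt W.det ≠ 0 := by positivity
  have h4 : ((|S.det| : ℝ) : ℂ) ≠ 0 := by
    simp [habs, hsq]
  refine mul_left_cancel₀ h4 ?_
  have hsqc : ((Real.sqrt W.det : ℝ) : ℂ) ≠ 0 := Complex.ofReal_ne_zero.mpr hsq
  rw [← h1, h2, habs]
  push_cast
  field_simp


/-- The Gaussian wavefunction
`φ_{WY}(x) = (πħ)^{−n/4} (det W)^{1/4} exp(−⟨(W+iY)x, x⟩/(2ħ))` on `ℝⁿ`. -/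
noncomputable def gaussianWY (n : ℕ) (hbar : ℝ) (W Y : Matrix (Fin n) (Fin n) ℝ)
    (x : Fin n → ℝ) : ℂ :=
  (((Real.pi * hbar) ^ (-(n : ℝ) / 4) * W.det ^ ((1 : ℝ) / 4) : ℝ) : ℂ) *
    Complex.exp (-(((W.map Complex.ofReal + Complex.I • Y.map Complex.ofReal).mulVec
        (fun i => (x i : ℂ))) ⬝ᵥ (fun i => (x i : ℂ))) / (2 * (hbar : ℂ)))

/-- the Wigner transform
`Wφ_{WY}(x,p) = (2πħ)^{−n} ∫ e^{−i⟨p,y⟩/ħ} φ_{WY}(x+y/2) conj(φ_{WY}(x−y/2)) dy`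
of the Gaussian `φ_{WY}` equals `(πħ)^{−n} exp(−⟨Gz,z⟩/ħ)` with `z = (x,p)` and
`G = [[W + Y W⁻¹ Y, Y W⁻¹],[W⁻¹ Y, W⁻¹]]`. -/
theorem statement11 (n : ℕ) (hbar : ℝ) (hhbar : 0 < hbar)
    (W Y : Matrix (Fin n) (Fin n) ℝ) (hW : W.PosDef) (hY : Y.IsSymm)
    (x p : Fin n → ℝ) :
    (((2 * Real.pi * hbar) ^ (-(n : ℝ)) : ℝ) : ℂ) *
        ∫ y : Fin n → ℝ,
          Complex.exp (-(Complex.I * ((p ⬝ᵥ y : ℝ) : ℂ)) / (hbar : ℂ)) *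
            gaussianWY n hbar W Y (x + y / 2) *
            (starRingEnd ℂ) (gaussianWY n hbar W Y (x - y / 2))
      = (((Real.pi * hbar) ^ (-(n : ℝ)) : ℝ) : ℂ) *
          Complex.exp (-((((Matrix.fromBlocks (W + Y * W⁻¹ * Y) (Y * W⁻¹) (W⁻¹ * Y)
                W⁻¹).mulVec (Sum.elim x p) ⬝ᵥ Sum.elim x p : ℝ)) : ℂ) / (hbar : ℂ)) := by
  have hWt : Wᵀ = W := by
    have := hW.isHermitian
    rwa [Matrix.IsHermitian, conjTranspose_eq_transpose_of_trivial] at this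
  have hYt : Yᵀ = Y := hY
  have hWinvt : (W⁻¹)ᵀ = W⁻¹ := by rw [Matrix.transpose_nonsing_inv, hWt]
  have hWct : (W.map Complex.ofReal)ᵀ = W.map Complex.ofReal := by
    rw [← Matrix.transpose_map, hWt]
  have hYct : (Y.map Complex.ofReal)ᵀ = Y.map Complex.ofReal := by
    rw [← Matrix.transpose_map, hYt]
  set C : ℝ := (Real.pi * hbar) ^ (-(n : ℝ) / 4) * W.det ^ ((1 : ℝ) / 4) with hCdef
  set b : Fin n → ℝ := Y *ᵥ x + p with hbdef
  have hprod : ∀ (c a e d : ℂ), Complex.exp a * (c * Complex.exp e) * (c * Complex.exp d)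
      = (c * c) * Complex.exp (a + e + d) := by
    intro c a e d
    rw [Complex.exp_add, Complex.exp_add]
    ring
  have hpoint : ∀ y : Fin n → ℝ,
      Complex.exp (-(Complex.I * ((p ⬝ᵥ y : ℝ) : ℂ)) / (hbar : ℂ)) *
          gaussianWY n hbar W Y (x + y / 2) *
          (starRingEnd ℂ) (gaussianWY n hbar W Y (x - y / 2))
        = ((C ^ 2 : ℝ) : ℂ) * Complex.exp (-((W *ᵥ x ⬝ᵥ x : ℝ) : ℂ) / hbar) *
            Complex.exp (-((W *ᵥ y ⬝ᵥ y : ℝ) : ℂ) / (4 * hbar)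
              - Complex.I * ((b ⬝ᵥ y : ℝ) : ℂ) / hbar) := by
    intro y
    have hcu : (fun i => (((x + y / 2) : Fin n → ℝ) i : ℂ))
        = (fun i => (x i : ℂ)) + (2⁻¹ : ℂ) • (fun i => (y i : ℂ)) := by
      funext i
      simp only [Pi.add_apply, Pi.div_apply, Pi.smul_apply, smul_eq_mul]
      push_cast
      norm_num
      ring
    have hcv : (fun i => (((x - y / 2) : Fin n → ℝ) i : ℂ))
        = (fun i => (x i : ℂ)) - (2⁻¹ : ℂ) • (fun i => (y i : ℂ)) := by
      funext i
      simp only [Pi.sub_apply, Pi.div_apply, Pi.smul_apply, smul_eq_mul]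
      push_cast
      norm_num
      ring
    have hb : (fun i => (b i : ℂ))
        = (Y.map Complex.ofReal) *ᵥ (fun i => (x i : ℂ)) + (fun i => (p i : ℂ)) := by
      rw [← cast_vec_mulVec]
      funext i
      simp [hbdef]
    have hconj : (starRingEnd ℂ) (gaussianWY n hbar W Y (x - y / 2))
        = ((C : ℝ) : ℂ) * Complex.exp
            (-((W.map Complex.ofReal - Complex.I • Y.map Complex.ofReal) *ᵥ
              (fun i => (((x - y / 2) : Fin n → ℝ) i : ℂ)) ⬝ᵥ
              (fun i => (((x - y / 2) : Fin n → ℝ) i : ℂ))) / (2 * (hbar : ℂ))) := by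
      rw [gaussianWY, _root_.map_mul, Complex.conj_ofReal, ← Complex.exp_conj, map_div₀,
        map_neg, _root_.map_mul, Complex.conj_ofReal]
      rw [conj_dot W Y (x - y / 2), map_ofNat (starRingEnd ℂ) 2, hCdef, Complex.ofReal_mul]
    rw [hconj, gaussianWY, hprod]
    have harg : -(Complex.I * ((p ⬝ᵥ y : ℝ) : ℂ)) / (hbar : ℂ)
          + -((W.map Complex.ofReal + Complex.I • Y.map Complex.ofReal) *ᵥ
              (fun i => (((x + y / 2) : Fin n → ℝ) i : ℂ)) ⬝ᵥ
              (fun i => (((x + y / 2) : Fin n → ℝ) i : ℂ))) / (2 * (hbar : ℂ))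
          + -((W.map Complex.ofReal - Complex.I • Y.map Complex.ofReal) *ᵥ
              (fun i => (((x - y / 2) : Fin n → ℝ) i : ℂ)) ⬝ᵥ
              (fun i => (((x - y / 2) : Fin n → ℝ) i : ℂ))) / (2 * (hbar : ℂ))
        = -((W *ᵥ x ⬝ᵥ x : ℝ) : ℂ) / hbar
          + (-((W *ᵥ y ⬝ᵥ y : ℝ) : ℂ) / (4 * hbar)
              - Complex.I * ((b ⬝ᵥ y : ℝ) : ℂ) / hbar) := by
      rw [hcu, hcv, cast_dot p y, cast_mulVec_dot W x x, cast_mulVec_dot W y y,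
        cast_dot b y, hb]
      exact expo_id (hbar : ℂ) hWct hYct _ _ _
    rw [harg, Complex.exp_add, Complex.ofReal_pow]
    ring
  rw [integral_congr_ae (Filter.Eventually.of_forall hpoint), integral_const_mul,
    gauss_integral hhbar W hW b]
  rw [block_id W Y hWt hYt hWinvt x p, mul_mul_mul_comm, ← Complex.exp_add]
  have hexps : -((W *ᵥ x ⬝ᵥ x : ℝ) : ℂ) / hbar + -((W⁻¹ *ᵥ b ⬝ᵥ b : ℝ) : ℂ) / hbar
      = -(((W *ᵥ x ⬝ᵥ x + W⁻¹ *ᵥ b ⬝ᵥ b : ℝ)) : ℂ) / hbar := by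
    push_cast
    ring
  rw [hexps, ← mul_assoc, ← Complex.ofReal_mul, ← Complex.ofReal_mul]
  congr 2
  rw [← mul_assoc]
  exact const_id hhbar hW.det_pos
end

section
/- Let W and Y be real symmetric n×n matrices with W positive definite. Then the complex matrix W + iY is invertible and (W + iY)⁻¹ = (W + Y W⁻¹ Y)⁻¹ − i W⁻¹ Y (W + Y W⁻¹ Y)⁻¹. -/
open Matrix

/-- for real symmetric matrices `W` (positive definite) and `Y`, the complex
matrix `W + iY` is invertible and
`(W + iY)⁻¹ = (W + Y W⁻¹ Y)⁻¹ − i W⁻¹ Y (W + Y W⁻¹ Y)⁻¹`. -/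
theorem statement13 (n : ℕ) (W Y : Matrix (Fin n) (Fin n) ℝ)
    (hW : W.PosDef) (hY : Y.IsSymm) :
    IsUnit (W.map Complex.ofReal + Complex.I • Y.map Complex.ofReal) ∧
    (W.map Complex.ofReal + Complex.I • Y.map Complex.ofReal)⁻¹
      = ((W + Y * W⁻¹ * Y)⁻¹).map Complex.ofReal
          - Complex.I • (W⁻¹ * Y * (W + Y * W⁻¹ * Y)⁻¹).map Complex.ofReal := by
  have hYWY : (Y * W⁻¹ * Y).PosSemidef := by
    have h := hW.inv.posSemidef.mul_mul_conjTranspose_same Y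
    have hYT : Yᴴ = Y := by
      simpa [Matrix.conjTranspose_eq_transpose_of_trivial, Matrix.IsSymm] using hY
    rwa [hYT] at h
  have hM : (W + Y * W⁻¹ * Y).PosDef := hW.add_posSemidef hYWY
  set A := (W + Y * W⁻¹ * Y)⁻¹ with hA
  have hMA : (W + Y * W⁻¹ * Y) * A = 1 :=
    Matrix.mul_nonsing_inv _ (isUnit_iff_ne_zero.mpr hM.det_pos.ne')
  have hWinv : W * W⁻¹ = 1 :=
    Matrix.mul_nonsing_inv _ (isUnit_iff_ne_zero.mpr hW.det_pos.ne')
  -- real-part identity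
  have hre : W * A + Y * (W⁻¹ * Y * A) = 1 := by
    calc W * A + Y * (W⁻¹ * Y * A) = (W + Y * W⁻¹ * Y) * A := by noncomm_ring
    _ = 1 := hMA
  -- imaginary-part identity
  have him : Y * A - W * (W⁻¹ * Y * A) = 0 := by
    have : W * (W⁻¹ * Y * A) = (W * W⁻¹) * (Y * A) := by noncomm_ring
    rw [this, hWinv, Matrix.one_mul, sub_self]
  let φ : Matrix (Fin n) (Fin n) ℝ →+* Matrix (Fin n) (Fin n) ℂ := Complex.ofRealHom.mapMatrix
  have hφ : ∀ X : Matrix (Fin n) (Fin n) ℝ, X.map Complex.ofReal = φ X := fun X => rfl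
  have key : (W.map Complex.ofReal + Complex.I • Y.map Complex.ofReal) *
      (((W + Y * W⁻¹ * Y)⁻¹).map Complex.ofReal
        - Complex.I • (W⁻¹ * Y * (W + Y * W⁻¹ * Y)⁻¹).map Complex.ofReal) = 1 := by
    rw [hφ, hφ, hφ, hφ]
    have expand : (φ W + Complex.I • φ Y) * (φ A - Complex.I • φ (W⁻¹ * Y * A))
        = (φ W * φ A + φ Y * φ (W⁻¹ * Y * A))
          + Complex.I • (φ Y * φ A - φ W * φ (W⁻¹ * Y * A)) := by
      simp only [Matrix.add_mul, Matrix.mul_sub, Matrix.smul_mul, Matrix.mul_smul, smul_smul,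
        smul_sub, smul_add, Complex.I_mul_I, neg_one_smul, sub_neg_eq_add, neg_smul, one_smul]
      abel
    rw [expand, ← _root_.map_mul φ W A, ← _root_.map_mul φ Y, ← _root_.map_mul φ Y A,
      ← _root_.map_mul φ W, ← map_add, ← map_sub, hre, him, map_zero, _root_.map_one φ, smul_zero, add_zero]
  exact ⟨(Matrix.isUnit_iff_isUnit_det _).mpr (Matrix.isUnit_det_of_right_inverse key), Matrix.inv_eq_right_inv key⟩
end

section
/- Let Σ be a real symmetric 2n×2n matrix satisfying the quantum condition Σ + (iħ/2)J ⪰ 0. Writing coordinates z = (x₁,…,xₙ,p₁,…,pₙ) and denoting σ_{x_j x_j} = Σ_{j,j}, σ_{p_j p_j} = Σ_{n+j,n+j}, σ_{x_j p_j} = Σ_{j,n+j}, the Robertson–Schrödinger inequalities hold: σ_{x_j x_j} σ_{p_j p_j} ≥ σ_{x_j p_j}² + ħ²/4 for every j = 1, …, n. -/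
open Matrix ComplexOrder

lemma psd_det_nonneg {m : Type*} [Fintype m] [DecidableEq m]
    {A : Matrix m m ℂ} (hA : A.PosSemidef) : ∃ r : ℝ, 0 ≤ r ∧ A.det = (r : ℂ) := by
  refine ⟨∏ i, hA.1.eigenvalues i, Finset.prod_nonneg fun i _ => hA.eigenvalues_nonneg i, ?_⟩
  rw [hA.1.det_eq_prod_eigenvalues]
  push_cast
  rfl

/-- if the real symmetric matrix `Σ` satisfies the quantum condition
`Σ + (iħ/2)J ⪰ 0`, then the Robertson–Schrödinger inequalities
`σ_{x_j x_j} σ_{p_j p_j} ≥ σ_{x_j p_j}² + ħ²/4` hold for all `j`. -/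
theorem statement15 (n : ℕ) (hbar : ℝ) (hhbar : 0 < hbar)
    (Cov : Matrix (Fin n ⊕ Fin n) (Fin n ⊕ Fin n) ℝ) (hsymm : Cov.IsSymm)
    (hquant : (Cov.map Complex.ofReal
        + (Complex.I * (hbar / 2)) • (Jmat n).map Complex.ofReal).PosSemidef) :
    ∀ j : Fin n,
      Cov (Sum.inl j) (Sum.inr j) ^ 2 + hbar ^ 2 / 4
        ≤ Cov (Sum.inl j) (Sum.inl j) * Cov (Sum.inr j) (Sum.inr j) := by
  intro j
  set M := Cov.map Complex.ofReal
        + (Complex.I * (hbar / 2)) • (Jmat n).map Complex.ofReal with hM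
  set e : Fin 2 → (Fin n ⊕ Fin n) := ![Sum.inl j, Sum.inr j] with he
  have hA : (M.submatrix e e).PosSemidef := hquant.submatrix e
  obtain ⟨r, hr, hdet⟩ := psd_det_nonneg hA
  have hc : Cov (Sum.inr j) (Sum.inl j) = Cov (Sum.inl j) (Sum.inr j) := hsymm.apply _ _
  set a := Cov (Sum.inl j) (Sum.inl j)
  set b := Cov (Sum.inr j) (Sum.inr j)
  set c := Cov (Sum.inl j) (Sum.inr j)
  have hdet2 : (M.submatrix e e).det = ((a * b - (c ^ 2 + hbar ^ 2 / 4) : ℝ) : ℂ) := by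
    rw [Matrix.det_fin_two]
    simp only [Matrix.submatrix_apply, he, hM, Matrix.add_apply, Matrix.map_apply,
      Matrix.smul_apply, Jmat, Matrix.fromBlocks_apply₁₁, Matrix.fromBlocks_apply₁₂,
      Matrix.fromBlocks_apply₂₁, Matrix.fromBlocks_apply₂₂, Matrix.cons_val_zero,
      Matrix.cons_val_one, Matrix.head_cons, Matrix.zero_apply, Matrix.one_apply_eq,
      Matrix.neg_apply, hc, smul_eq_mul]
    push_cast
    ring_nf
    rw [Complex.I_sq]
    ring
  rw [hdet2] at hdet
  have : a * b - (c ^ 2 + hbar ^ 2 / 4) = r := by exact_mod_cast hdet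
  linarith
end
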